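/- arXiv:2305.00641 — 9 statements merged into one kernel-verified Lean document; each statement's English description precedes it below -/
import Mathlib

section
/- If ≻_s is acyclic for every s ∈ S, then there exists a stable matching for ≻, and moreover there exists a student optimal stable matching (SOSM) for ≻. -/
/-! Common definitions for school choice with partial priorities
(Kitahara–Okumura, "On extensions of partial priorities in school choice"). -/

/-- A binary relation is asymmetric. -/
def Asymm {I : Type*} (B : I → I → Prop) : Prop :=
  ∀ i j, B i j → ¬ B j i

/-- Negative transitivity. -/
def NegTransitive {I : Type*} (B : I → I → Prop) : Prop :=
  ∀ a b c : I, ¬ B a b → ¬ B b c → ¬ B a c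

/-- Acyclicity: there are no `K ≥ 1` and `x₀, …, x_K` with `(x_{k-1}, x_k) ∈ B` for all
`k = 1, …, K` and `(x_K, x₀) ∈ B`. -/
def AcyclicRel {I : Type*} (B : I → I → Prop) : Prop :=
  ¬ ∃ (K : ℕ) (x : ℕ → I), 1 ≤ K ∧ (∀ k, 1 ≤ k → k ≤ K → B (x (k - 1)) (x k)) ∧ B (x K) (x 0)

/-- A (strict) partial order: an asymmetric relation that is transitive. -/
def PartialOrderRel {I : Type*} (B : I → I → Prop) : Prop :=
  Asymm B ∧ Transitive B

/-- A weak order: a partial order that is negatively transitive. -/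
def WeakOrderRel {I : Type*} (B : I → I → Prop) : Prop :=
  PartialOrderRel B ∧ NegTransitive B

/-- A total order: a weak order that is complete. -/
def TotalOrderRel {I : Type*} (B : I → I → Prop) : Prop :=
  WeakOrderRel B ∧ ∀ a b : I, a ≠ b → B a b ∨ B b a

/-- A strict total order preference over `Option S`, where `none` is the outside option `∅`. -/
def StrictPref {S : Type*} (P : Option S → Option S → Prop) : Prop :=
  Asymm P ∧ Transitive P ∧ ∀ a b : Option S, a ≠ b → P a b ∨ P b a

/-- The weak preference `R` associated with `P`: `a R b` iff `a P b` or `a = b`. -/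
def RPref {S : Type*} (P : Option S → Option S → Prop) (a b : Option S) : Prop :=
  P a b ∨ a = b

/-- A matching: an assignment of students to schools (or `none`) respecting capacities. -/
def IsMatching {I S : Type*} [Fintype I] (q : S → ℕ) (μ : I → Option S) : Prop :=
  ∀ s : S, {i : I | μ i = some s}.ncard ≤ q s

/-- Individual rationality: every student weakly prefers her assignment to `∅`. -/
def IndividuallyRational {I S : Type*} (P : I → Option S → Option S → Prop)
    (μ : I → Option S) : Prop :=
  ∀ i, RPref (P i) (μ i) none

/-- Non-wastefulness: whenever a student strictly prefers `s` to her assignment, `s` is full. -/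
def NonWasteful {I S : Type*} [Fintype I] (P : I → Option S → Option S → Prop) (q : S → ℕ)
    (μ : I → Option S) : Prop :=
  ∀ i s, P i (some s) (μ i) → {j : I | μ j = some s}.ncard = q s

/-- Fairness for the priority profile `pr`: no student's priority is violated. -/
def Fair {I S : Type*} (P : I → Option S → Option S → Prop) (pr : S → I → I → Prop)
    (μ : I → Option S) : Prop :=
  ¬ ∃ (i j : I) (s : S), μ j = some s ∧ μ i ≠ some s ∧ RPref (P i) (some s) (μ i) ∧ pr s i j

/-- Stability for the priority profile `pr`. -/
def StableFor {I S : Type*} [Fintype I] (P : I → Option S → Option S → Prop) (q : S → ℕ)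
    (pr : S → I → I → Prop) (μ : I → Option S) : Prop :=
  IndividuallyRational P μ ∧ NonWasteful P q μ ∧ Fair P pr μ

/-- `μ'` Pareto dominates `μ`. -/
def ParetoDominates {I S : Type*} (P : I → Option S → Option S → Prop)
    (μ' μ : I → Option S) : Prop :=
  (∀ i, RPref (P i) (μ' i) (μ i)) ∧ ∃ i, P i (μ' i) (μ i)

/-- A student optimal stable matching (SOSM) for `pr`. -/
def IsSOSM {I S : Type*} [Fintype I] (P : I → Option S → Option S → Prop) (q : S → ℕ)
    (pr : S → I → I → Prop) (μ : I → Option S) : Prop :=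
  StableFor P q pr μ ∧
    ¬ ∃ μ' : I → Option S, IsMatching q μ' ∧ StableFor P q pr μ' ∧ ParetoDominates P μ' μ

/-- `B'` is a total order extension of `B`. -/
def IsExtension {I : Type*} (B B' : I → I → Prop) : Prop :=
  TotalOrderRel B' ∧ ∀ i j, B i j → B' i j

/-- `pr'` is an extension profile of `pr`. -/
def IsExtensionProfile {I S : Type*} (pr pr' : S → I → I → Prop) : Prop :=
  ∀ s, IsExtension (pr s) (pr' s)

/-- The maximal set `M(I', B)` of elements of `I'` undominated within `I'`. -/
def MaximalSet {I : Type*} (B : I → I → Prop) (I' : Set I) : Set I :=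
  {i ∈ I' | ∀ j ∈ I', j ≠ i → ¬ B j i}

/-- `e` enumerates `I` as a sequential maximal ordering (SMO) sequence for `B`:
each element is chosen from the maximal set of the remaining elements. -/
def IsSMOSeq {I : Type*} [Fintype I] (B : I → I → Prop)
    (e : Fin (Fintype.card I) ≃ I) : Prop :=
  ∀ t, e t ∈ MaximalSet B {i | ∀ t' : Fin (Fintype.card I), t' < t → e t' ≠ i}

/-- The total order induced by an enumeration: earlier elements rank higher. -/
def InducedOrder {I : Type*} [Fintype I] (e : Fin (Fintype.card I) ≃ I) : I → I → Prop :=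
  fun i j => e.symm i < e.symm j

/-- `e` is the `r`-tiebreaking SMO sequence for `B`: at each step it picks the element of the
maximal set of the remaining elements minimizing `r`. -/
def IsRTiebreakSMOSeq {I : Type*} [Fintype I] (B : I → I → Prop)
    (r : I ≃ Fin (Fintype.card I)) (e : Fin (Fintype.card I) ≃ I) : Prop :=
  IsSMOSeq B e ∧
    ∀ t, ∀ i ∈ MaximalSet B {i | ∀ t' : Fin (Fintype.card I), t' < t → e t' ≠ i},
      r (e t) ≤ r i

/-- `pr'` is obtained from `pr` by a single (common) tiebreaking rule: one bijection
`r` from `I` to `{1, …, |I|}` such that every `pr' s` is induced by the `r`-tiebreaking SMO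
sequence for `pr s`. -/
def SingleTiebreakProfile {I S : Type*} [Fintype I] (pr pr' : S → I → I → Prop) : Prop :=
  ∃ r : I ≃ Fin (Fintype.card I), ∀ s : S,
    ∃ e : Fin (Fintype.card I) ≃ I, IsRTiebreakSMOSeq (pr s) r e ∧ pr' s = InducedOrder e

/-- Partial stability for `(pr, C)`: individually rational, non-wasteful, and every priority
violation is allowed by `C`. -/
def PartiallyStable {I S : Type*} [Fintype I] (P : I → Option S → Option S → Prop) (q : S → ℕ)
    (pr : S → I → I → Prop) (C : S → I → I → Prop) (μ : I → Option S) : Prop :=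
  IndividuallyRational P μ ∧ NonWasteful P q μ ∧
    ∀ (i j : I) (s : S), μ j = some s → P i (some s) (μ i) → pr s i j → C s i j

section AuxLemmas

lemma acyc_irrefl {I : Type*} {B : I → I → Prop} (h : AcyclicRel B) (i : I) : ¬ B i i := by
  intro hB
  exact h ⟨1, fun _ => i, le_refl 1, fun _ _ _ => hB, hB⟩

lemma exists_max_of_acyclic {I : Type*} [Finite I] {B : I → I → Prop}
    (h : AcyclicRel B) {A : Set I} (hA : A.Nonempty) :
    ∃ i ∈ A, ∀ j ∈ A, ¬ B j i := by
  by_contra hcon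
  push_neg at hcon
  obtain ⟨i0, hi0⟩ := hA
  classical
  have hstep : ∀ i, i ∈ A → ∃ j, j ∈ A ∧ B j i := by
    intro i hi; obtain ⟨j, hj1, hj2⟩ := hcon i hi; exact ⟨j, hj1, hj2⟩
  let g : I → I := fun i => if hi : i ∈ A then (hstep i hi).choose else i
  have key : ∀ i (hi : i ∈ A), g i ∈ A ∧ B (g i) i := by
    intro i hi
    simp only [g, dif_pos hi]
    exact ⟨(hstep i hi).choose_spec.1, (hstep i hi).choose_spec.2⟩
  let x : ℕ → I := fun n => Nat.rec i0 (fun _ prev => g prev) n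
  have hmem : ∀ n, x n ∈ A := by
    intro n
    induction n with
    | zero => exact hi0
    | succ n ih => exact (key (x n) ih).1
  have hB : ∀ n, B (x (n + 1)) (x n) := fun n => (key (x n) (hmem n)).2
  have main : ∀ a b : ℕ, a < b → x a = x b → False := by
    intro a b hab heq
    by_cases hb : b = a + 1
    · subst hb
      have hBa := hB a
      rw [heq] at hBa
      exact acyc_irrefl h (x (a + 1)) hBa
    · have hd : a + 2 ≤ b := by omega
      apply h
      refine ⟨b - a - 1, fun k => x (b - k), by omega, ?_, ?_⟩
      · intro k hk1 hk2
        show B (x (b - (k - 1))) (x (b - k))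
        have e : b - (k - 1) = (b - k) + 1 := by omega
        rw [e]
        exact hB (b - k)
      · have e1 : b - (b - a - 1) = a + 1 := by omega
        have e0 : b - 0 = b := rfl
        show B (x (b - (b - a - 1))) (x (b - 0))
        rw [e1, e0, ← heq]
        exact hB a
  obtain ⟨a, b, hne, heq⟩ := Finite.exists_ne_map_eq_of_infinite x
  rcases lt_or_gt_of_ne hne with h1 | h1
  · exact main a b h1 heq
  · exact main b a h1 heq.symm

noncomputable def rkOf {S : Type*} (P : Option S → Option S → Prop) (a : Option S) : ℕ :=
  {b | P a b}.ncard

lemma rk_lt_of {S : Type*} [Fintype S] {P : Option S → Option S → Prop}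
    (hP : StrictPref P) {x y : Option S} (h : P x y) : rkOf P y < rkOf P x := by
  apply Set.ncard_lt_ncard ?_ (Set.toFinite _)
  constructor
  · intro b hb; exact hP.2.1 h hb
  · intro hsub
    have hy : y ∈ {b | P x b} := h
    exact hP.1 y y (hsub hy) (hsub hy)

lemma rk_le_of {S : Type*} [Fintype S] {P : Option S → Option S → Prop}
    (hP : StrictPref P) {x y : Option S} (h : RPref P x y) : rkOf P y ≤ rkOf P x := by
  rcases h with h | h
  · exact (rk_lt_of hP h).le
  · rw [h]

end AuxLemmas

/-- Corollary 1: if every priority relation is acyclic, then a stable matching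
for `pr` exists, and moreover a student optimal stable matching for `pr` exists. -/
theorem exists_stable_and_sosm_of_acyclic {I S : Type*} [Fintype I] [Fintype S]
    (hI : 3 ≤ Fintype.card I)
    (P : I → Option S → Option S → Prop) (hP : ∀ i, StrictPref (P i))
    (q : S → ℕ) (hq : ∀ s, 1 ≤ q s)
    (pr : S → I → I → Prop)
    (hasym : ∀ s, Asymm (pr s)) (hacyc : ∀ s, AcyclicRel (pr s)) :
    (∃ μ : I → Option S, IsMatching q μ ∧ StableFor P q pr μ) ∧
      ∃ μ : I → Option S, IsMatching q μ ∧ IsSOSM P q pr μ := by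
  classical
  set T : Set (I → Option S) :=
    {μ | IsMatching q μ ∧ IndividuallyRational P μ ∧ Fair P pr μ} with hTdef
  have hT0 : (fun _ : I => (none : Option S)) ∈ T := by
    refine ⟨?_, ?_, ?_⟩
    · intro s
      have he : {i : I | (none : Option S) = some s} = ∅ := by ext i; simp
      rw [he, Set.ncard_empty]
      exact Nat.zero_le _
    · intro i; exact Or.inr rfl
    · rintro ⟨i, j, s, hj, -⟩; cases hj
  obtain ⟨μ, hμT, hmax⟩ :=
    Set.Finite.exists_maximalFor (fun ν => ∑ i, rkOf (P i) (ν i)) T (Set.toFinite T) ⟨_, hT0⟩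
  obtain ⟨hμM, hμIR, hμF⟩ := hμT
  have hNW : NonWasteful P q μ := by
    intro i0 s hP0
    by_contra hne
    have hlt : {j : I | μ j = some s}.ncard < q s := lt_of_le_of_ne (hμM s) hne
    set A : Set I := {k | μ k ≠ some s ∧ P k (some s) (μ k)} with hAdef
    have hi0A : i0 ∈ A := by
      refine ⟨?_, hP0⟩
      intro hEq
      rw [hEq] at hP0
      exact (hP i0).1 _ _ hP0 hP0
    obtain ⟨i, hiA, hiMax⟩ := exists_max_of_acyclic (hacyc s) ⟨i0, hi0A⟩
    set μ' := Function.update μ i (some s) with hμ'def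
    have hμ'i : μ' i = some s := Function.update_self i (some s) μ
    have hμ'j : ∀ j, j ≠ i → μ' j = μ j := fun j hj => Function.update_of_ne hj _ _
    have hμ'M : IsMatching q μ' := by
      intro t
      by_cases hts : t = s
      · subst hts
        have hsub : {j : I | μ' j = some t} ⊆ insert i {j : I | μ j = some t} := by
          intro j hj
          by_cases hji : j = i
          · rw [hji]; exact Set.mem_insert _ _
          · refine Set.mem_insert_of_mem _ ?_
            rw [Set.mem_setOf_eq, ← hμ'j j hji]
            exact hj
        calc {j : I | μ' j = some t}.ncard
            ≤ (insert i {j : I | μ j = some t}).ncard :=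
              Set.ncard_le_ncard hsub (Set.toFinite _)
          _ ≤ {j : I | μ j = some t}.ncard + 1 := Set.ncard_insert_le _ _
          _ ≤ q t := hlt
      · have hsub : {j : I | μ' j = some t} ⊆ {j : I | μ j = some t} := by
          intro j hj
          by_cases hji : j = i
          · exfalso
            rw [Set.mem_setOf_eq, hji, hμ'i] at hj
            exact hts (Option.some_injective S hj.symm)
          · rw [Set.mem_setOf_eq, ← hμ'j j hji]
            exact hj
        exact le_trans (Set.ncard_le_ncard hsub (Set.toFinite _)) (hμM t)
    have hμ'IR : IndividuallyRational P μ' := by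
      intro j
      by_cases hji : j = i
      · subst hji
        rw [hμ'i]
        rcases hμIR j with hPj | hEq
        · exact Or.inl ((hP j).2.1 hiA.2 hPj)
        · have h2 := hiA.2
          rw [hEq] at h2
          exact Or.inl h2
      · rw [hμ'j j hji]; exact hμIR j
    have hμ'F : Fair P pr μ' := by
      rintro ⟨k, j, t, hjt, hkt, hRk, hprk⟩
      by_cases hji : j = i
      · subst hji
        have hts : t = s := Option.some_injective S (hjt.symm.trans hμ'i)
        subst hts
        by_cases hki : k = j
        · rw [hki] at hkt
          exact hkt hjt
        · have hk' : μ k ≠ some t := by rw [← hμ'j k hki]; exact hkt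
          have hPk : P k (some t) (μ k) := by
            rcases hRk with h1 | h1
            · rwa [hμ'j k hki] at h1
            · exact absurd ((hμ'j k hki) ▸ h1).symm hk'
          exact hiMax k ⟨hk', hPk⟩ hprk
      · have hjt' : μ j = some t := by rw [← hμ'j j hji]; exact hjt
        by_cases hki : k = i
        · subst hki
          have hts : t ≠ s := by
            intro hEq
            rw [hEq, hμ'i] at hkt
            exact hkt rfl
          have hPks : P k (some t) (some s) := by
            rcases hRk with h1 | h1
            · rwa [hμ'i] at h1
            · exfalso
              rw [hμ'i] at h1
              exact hts (Option.some_injective S h1)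
          have hPt : P k (some t) (μ k) := (hP k).2.1 hPks hiA.2
          have hkt' : μ k ≠ some t := by
            intro hEq
            rw [hEq] at hPt
            exact (hP k).1 _ _ hPt hPt
          exact hμF ⟨k, j, t, hjt', hkt', Or.inl hPt, hprk⟩
        · have hkt' : μ k ≠ some t := by rw [← hμ'j k hki]; exact hkt
          have hRk' : RPref (P k) (some t) (μ k) := by rw [← hμ'j k hki]; exact hRk
          exact hμF ⟨k, j, t, hjt', hkt', hRk', hprk⟩
    have hμ'T : μ' ∈ T := ⟨hμ'M, hμ'IR, hμ'F⟩
    have hlt' : ∑ j, rkOf (P j) (μ j) < ∑ j, rkOf (P j) (μ' j) := by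
      apply Finset.sum_lt_sum
      · intro j _
        by_cases hji : j = i
        · subst hji
          rw [hμ'i]
          exact (rk_lt_of (hP j) hiA.2).le
        · rw [hμ'j j hji]
      · exact ⟨i, Finset.mem_univ i, by rw [hμ'i]; exact rk_lt_of (hP i) hiA.2⟩
    exact absurd (hmax hμ'T hlt'.le) (not_le.mpr hlt')
  have hStable : StableFor P q pr μ := ⟨hμIR, hNW, hμF⟩
  refine ⟨⟨μ, hμM, hStable⟩, μ, hμM, hStable, ?_⟩
  rintro ⟨μ'', hM'', hS'', hall, k, hk⟩
  have hμ''T : μ'' ∈ T := ⟨hM'', hS''.1, hS''.2.2⟩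
  have hlt : ∑ j, rkOf (P j) (μ j) < ∑ j, rkOf (P j) (μ'' j) := by
    apply Finset.sum_lt_sum
    · intro j _
      exact rk_le_of (hP j) (hall j)
    · exact ⟨k, Finset.mem_univ k, rk_lt_of (hP k) hk⟩
  exact absurd (hmax hμ''T hlt.le) (not_le.mpr hlt)
end

section
/- Suppose ≻_s is a partial order (asymmetric and transitive) for every s ∈ S, and μ₁, …, μ_K (K ≥ 1) are stable matchings for ≻ such that μ_{k'} Pareto dominates μ_k whenever 1 ≤ k < k' ≤ K. For each k ∈ {1, …, K} and s ∈ S define A_s^k = { (i,j) ∈ I × I : μ_k(i) = s and s P_j μ_k(j) } and ≻'_s = ≻_s ∪ ⋃_{k=1}^K A_s^k. Then for every s ∈ S the relation ≻'_s is acyclic. -/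
/-- Lemma 2, acyclicity: with partial order priorities and a Pareto-ranked chain
of stable matchings, the union of `pr s` with all relations
`A_s^k = {(i,j) | μ k i = s and s P_j μ k j}` is acyclic for every school `s`. -/
theorem union_with_dominance_relations_acyclic {I S : Type*} [Fintype I] [Fintype S]
    (hI : 3 ≤ Fintype.card I)
    (P : I → Option S → Option S → Prop) (hP : ∀ i, StrictPref (P i))
    (q : S → ℕ) (hq : ∀ s, 1 ≤ q s)
    (pr : S → I → I → Prop) (hpr : ∀ s, PartialOrderRel (pr s))
    (K : ℕ) (hK : 1 ≤ K) (μ : Fin K → I → Option S)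
    (hmatch : ∀ k, IsMatching q (μ k))
    (hstable : ∀ k, StableFor P q pr (μ k))
    (hdom : ∀ k k' : Fin K, k < k' → ParetoDominates P (μ k') (μ k)) :
    ∀ s : S, AcyclicRel
      (fun i j => pr s i j ∨ ∃ k : Fin K, μ k i = some s ∧ P j (some s) (μ k j)) := by
  intro s
  set B : I → I → Prop :=
    fun i j => pr s i j ∨ ∃ k : Fin K, μ k i = some s ∧ P j (some s) (μ k j) with hB
  rintro ⟨K', x, hK', hstep, hcyc⟩
  -- basic facts
  have hPasym : ∀ i (a b : Option S), P i a b → ¬ P i b a := fun i => (hP i).1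
  have hPtrans : ∀ i, Transitive (P i) := fun i => (hP i).2.1
  have hprasym := fun s' => (hpr s').1
  have hprtrans := fun s' => (hpr s').2
  have hPR : ∀ (j : I) (a x y : Option S), P j a x → RPref (P j) x y → P j a y := by
    intro j a x y h1 h2
    rcases h2 with h2 | rfl
    · exact hPtrans j h1 h2
    · exact h1
  have hRnot : ∀ (j : I) (x : Option S), P j (some s) x → RPref (P j) x (some s) → False := by
    intro j x h1 h2
    rcases h2 with h2 | rfl
    · exact hPasym j _ _ h1 h2
    · exact hPasym j _ _ h1 h1
  have hRtrans : ∀ (j : I) (a b c : Option S),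
      RPref (P j) a b → RPref (P j) b c → RPref (P j) a c := by
    intro j a b c h1 h2
    rcases h1 with h1 | rfl
    · exact Or.inl (hPR j a b c h1 h2)
    · exact h2
  have hmono : ∀ (k k' : Fin K) (i : I), k ≤ k' → RPref (P i) (μ k' i) (μ k i) := by
    intro k k' i h
    rcases lt_or_eq_of_le h with h | h
    · exact (hdom k k' h).1 i
    · exact Or.inr (by rw [h])
  have hfair : ∀ (k : Fin K) (i j : I),
      μ k i = some s → pr s j i → P j (some s) (μ k j) → False := by
    intro k i j h1 h2 h3
    have hne : μ k j ≠ some s := by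
      intro he; rw [he] at h3; exact hPasym j _ _ h3 h3
    exact (hstable k).2.2 ⟨j, i, s, h1, hne, Or.inl h3, h2⟩
  have hgetR : ∀ (k : Fin K) (i j : I),
      μ k i = some s → pr s j i → RPref (P j) (μ k j) (some s) := by
    intro k i j h1 h2
    by_cases he : μ k j = some s
    · exact Or.inr he
    · rcases (hP j).2.2 (some s) (μ k j) (fun h => he h.symm) with h | h
      · exact absurd h (fun h => hfair k i j h1 h2 h)
      · exact Or.inl h
  -- structure of transitive chains of B
  have key : ∀ a b : I, Relation.TransGen B a b →
      pr s a b ∨ ∃ k₁ k₂ : Fin K, k₁ ≤ k₂ ∧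
        (μ k₁ a = some s ∨ ∃ i, pr s a i ∧ μ k₁ i = some s) ∧
        (P b (some s) (μ k₂ b) ∨ ∃ j, P j (some s) (μ k₂ j) ∧ pr s j b) := by
    intro a b h
    induction h with
    | single hab =>
      rcases hab with hab | ⟨k, h1, h2⟩
      · exact Or.inl hab
      · exact Or.inr ⟨k, k, le_rfl, Or.inl h1, Or.inl h2⟩
    | @tail b c hab hbc ih =>
      rcases ih with ihp | ⟨k₁, k₂, hle, hstart, hend⟩
      · rcases hbc with hbc | ⟨k, h1, h2⟩
        · exact Or.inl (hprtrans s ihp hbc)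
        · exact Or.inr ⟨k, k, le_rfl, Or.inr ⟨b, ihp, h1⟩, Or.inl h2⟩
      · rcases hbc with hbc | ⟨k, h1, h2⟩
        · refine Or.inr ⟨k₁, k₂, hle, hstart, ?_⟩
          rcases hend with hend | ⟨j, hj1, hj2⟩
          · exact Or.inr ⟨b, hend, hbc⟩
          · exact Or.inr ⟨j, hj1, hprtrans s hj2 hbc⟩
        · -- the new A-edge has a later index than k₂
          have hk2k : ¬ k ≤ k₂ := by
            intro hkk
            rcases hend with hend | ⟨j, hj1, hj2⟩
            · have : RPref (P b) (μ k₂ b) (some s) := by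
                have := hmono k k₂ b hkk
                rwa [h1] at this
              exact hRnot b _ hend this
            · have hr1 : RPref (P j) (μ k j) (some s) := hgetR k b j h1 hj2
              have hr2 : RPref (P j) (μ k₂ j) (μ k j) := hmono k k₂ j hkk
              exact hRnot j _ hj1 (hRtrans j _ _ _ hr2 hr1)
          exact Or.inr ⟨k₁, k, le_trans hle (le_of_not_ge hk2k),
            hstart, Or.inl h2⟩
  -- build the cycle as a transitive chain
  have chain : ∀ n, 1 ≤ n → n ≤ K' → Relation.TransGen B (x 0) (x n) := by
    intro n
    induction n with
    | zero => intro h; omega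
    | succ m ih =>
      intro _ hm
      by_cases h0 : m = 0
      · subst h0
        exact Relation.TransGen.single (hstep 1 le_rfl (by omega))
      · exact (ih (by omega) (by omega)).tail (hstep (m + 1) (by omega) hm)
  have tg : Relation.TransGen B (x 0) (x 0) := (chain K' hK' le_rfl).tail hcyc
  rcases key _ _ tg with hp | ⟨k₁, k₂, hle, hstart, hend⟩
  · exact hprasym s _ _ hp hp
  · rcases hstart with hstart | ⟨i, hxi, hi⟩
    · rcases hend with hend | ⟨j, hj1, hj2⟩
      · have : RPref (P (x 0)) (μ k₂ (x 0)) (some s) := by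
          have := hmono k₁ k₂ (x 0) hle
          rwa [hstart] at this
        exact hRnot (x 0) _ hend this
      · exact hfair k₁ (x 0) j hstart hj2 (hPR j _ _ _ hj1 (hmono k₁ k₂ j hle))
    · rcases hend with hend | ⟨j, hj1, hj2⟩
      · exact hfair k₁ i (x 0) hi hxi (hPR (x 0) _ _ _ hend (hmono k₁ k₂ (x 0) hle))
      · exact hfair k₁ i j hi (hprtrans s hj2 hxi) (hPR j _ _ _ hj1 (hmono k₁ k₂ j hle))
end

section
/- Suppose ≻_s is a partial order (asymmetric and transitive) for every s ∈ S, and μ₁, …, μ_K (K ≥ 1) are stable matchings for ≻ such that μ_{k'} Pareto dominates μ_k whenever 1 ≤ k < k' ≤ K. For each k ∈ {1, …, K} and s ∈ S define A_s^k = { (i,j) ∈ I × I : μ_k(i) = s and s P_j μ_k(j) } and ≻'_s = ≻_s ∪ ⋃_{k=1}^K A_s^k. Then for every s ∈ S the relation ≻'_s is asymmetric: (i,j) ∈ ≻'_s implies (j,i) ∉ ≻'_s. -/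
/-- Lemma 2, asymmetry: with partial order priorities and a Pareto-ranked chain
of stable matchings, the union of `pr s` with all relations
`A_s^k = {(i,j) | μ k i = s and s P_j μ k j}` is asymmetric for every school `s`. -/
theorem union_with_dominance_relations_asymm {I S : Type*} [Fintype I] [Fintype S]
    (hI : 3 ≤ Fintype.card I)
    (P : I → Option S → Option S → Prop) (hP : ∀ i, StrictPref (P i))
    (q : S → ℕ) (hq : ∀ s, 1 ≤ q s)
    (pr : S → I → I → Prop) (hpr : ∀ s, PartialOrderRel (pr s))
    (K : ℕ) (hK : 1 ≤ K) (μ : Fin K → I → Option S)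
    (hmatch : ∀ k, IsMatching q (μ k))
    (hstable : ∀ k, StableFor P q pr (μ k))
    (hdom : ∀ k k' : Fin K, k < k' → ParetoDominates P (μ k') (μ k)) :
    ∀ (s : S) (i j : I),
      (pr s i j ∨ ∃ k : Fin K, μ k i = some s ∧ P j (some s) (μ k j)) →
      ¬ (pr s j i ∨ ∃ k : Fin K, μ k j = some s ∧ P i (some s) (μ k i)) := by
  intro s i j hij hji
  have irrefl : ∀ (a : I) (x : Option S), ¬ P a x x := fun a x h => (hP a).1 x x h h
  rcases hij with hp | ⟨k, hk1, hk2⟩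
  · rcases hji with hp' | ⟨k, hk1, hk2⟩
    · exact (hpr s).1 i j hp hp'
    · exact (hstable k).2.2 ⟨i, j, s, hk1, fun h => irrefl i _ (by rw [h] at hk2; exact hk2),
        Or.inl hk2, hp⟩
  · rcases hji with hp' | ⟨k', hk1', hk2'⟩
    · exact (hstable k).2.2 ⟨j, i, s, hk1, fun h => irrefl j _ (by rw [h] at hk2; exact hk2),
        Or.inl hk2, hp'⟩
    · rcases lt_trichotomy k k' with h | h | h
      · rcases (hdom k k' h).1 i with hpi | heq
        · rw [hk1] at hpi; exact (hP i).1 _ _ hk2' hpi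
        · rw [heq, hk1] at hk2'; exact irrefl i _ hk2'
      · subst h; rw [hk1] at hk2'; exact irrefl i _ hk2'
      · rcases (hdom k' k h).1 j with hpj | heq
        · rw [hk1'] at hpj; exact (hP j).1 _ _ hk2 hpj
        · rw [heq, hk1'] at hk2; exact irrefl j _ hk2
end

section
/- Let μ be a matching that is stable for the priority profile ≻ (each ≻_s an asymmetric binary relation on I). For each s ∈ S define A_s^μ = { (i,j) ∈ I × I : μ(i) = s and s P_j μ(j) }. Then for every profile ≻'' = (≻''_s)_{s∈S} of total orders on I with ≻_s ∪ A_s^μ ⊆ ≻''_s for all s ∈ S, the matching μ is stable for ≻''. -/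
/-- Erdil–Ergin observation: if `μ` is stable for `pr`, then `μ` is stable for
every profile of total orders containing `pr s ∪ A_s^μ` for each school `s`, where
`A_s^μ = {(i,j) | μ i = s and s P_j μ j}`. -/
theorem stable_for_total_orders_containing_augmented {I S : Type*} [Fintype I] [Fintype S]
    (hI : 3 ≤ Fintype.card I)
    (P : I → Option S → Option S → Prop) (hP : ∀ i, StrictPref (P i))
    (q : S → ℕ) (hq : ∀ s, 1 ≤ q s)
    (pr : S → I → I → Prop) (hpr : ∀ s, Asymm (pr s))
    (μ : I → Option S) (hμ : IsMatching q μ) (hstable : StableFor P q pr μ)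
    (pr'' : S → I → I → Prop) (hto : ∀ s, TotalOrderRel (pr'' s))
    (hsub : ∀ (s : S) (i j : I),
      (pr s i j ∨ (μ i = some s ∧ P j (some s) (μ j))) → pr'' s i j) :
    StableFor P q pr'' μ := by
  obtain ⟨hIR, hNW, _⟩ := hstable
  refine ⟨hIR, hNW, ?_⟩
  rintro ⟨i, j, s, hjs, his, hRi, hij⟩
  have hPi : P i (some s) (μ i) := by
    rcases hRi with h | h
    · exact h
    · exact absurd h.symm his
  have hji : pr'' s j i := hsub s j i (Or.inr ⟨hjs, hPi⟩)
  exact (hto s).1.1.1 i j hij hji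
end

section
/- Suppose ≻_s is a partial order (asymmetric and transitive) for every s ∈ S. Then a matching μ is stable for ≻ if and only if there exists an extension profile ≻' of ≻ such that μ is stable for ≻'. -/
theorem strict_extend_aux {I : Type*} (B : I → I → Prop) (hA : Asymm B) (hT : Transitive B) :
    ∃ B' : I → I → Prop, IsExtension B B' := by
  let r : I → I → Prop := fun a b => B a b ∨ a = b
  haveI : IsPartialOrder I r :=
    { refl := fun a => Or.inr rfl
      trans := fun a b c hab hbc => by
        rcases hab with h | rfl
        · rcases hbc with h' | rfl
          · exact Or.inl (hT h h')
          · exact Or.inl h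
        · exact hbc
      antisymm := fun a b hab hba => by
        rcases hab with h | rfl
        · rcases hba with h' | rfl
          · exact absurd h' (hA _ _ h)
          · rfl
        · rfl }
  obtain ⟨t, ht, hsub⟩ := extend_partialOrder r
  have htrans : Transitive t := ht.toIsPartialOrder.toIsPreorder.toIsTrans.trans
  have hanti : ∀ a b, t a b → t b a → a = b := ht.toIsPartialOrder.toAntisymm.antisymm
  have htot : ∀ a b, t a b ∨ t b a := ht.toTotal.total
  refine ⟨fun a b => t a b ∧ a ≠ b, ⟨⟨⟨?_, ?_⟩, ?_⟩, ?_⟩, ?_⟩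
  · rintro a b ⟨h1, h2⟩ ⟨h3, _⟩
    exact h2 (hanti _ _ h1 h3)
  · rintro a b c ⟨h1, h2⟩ ⟨h3, h4⟩
    refine ⟨htrans h1 h3, fun hac => ?_⟩
    subst hac
    exact h2 (hanti _ _ h1 h3)
  · rintro a b c hab hbc ⟨hac, hne⟩
    by_cases heab : a = b
    · exact hbc (heab ▸ ⟨hac, hne⟩)
    by_cases hebc : b = c
    · exact hab (hebc ▸ ⟨hac, hne⟩)
    have h1 : t b a := (htot a b).resolve_left fun h => hab ⟨h, heab⟩
    have h2 : t c b := (htot b c).resolve_left fun h => hbc ⟨h, hebc⟩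
    exact hne (hanti _ _ hac (htrans h2 h1))
  · intro a b hne
    rcases htot a b with h | h
    · exact Or.inl ⟨h, hne⟩
    · exact Or.inr ⟨h, fun e => hne e.symm⟩
  · intro i j h
    exact ⟨hsub i j (Or.inl h), fun e => hA i j h (e ▸ h)⟩

/-- Corollary 2, stable matchings: with partial order priorities, a matching is
stable for `pr` iff it is stable for some extension profile of `pr`. -/
theorem stable_iff_stable_for_some_extension {I S : Type*} [Fintype I] [Fintype S]
    (hI : 3 ≤ Fintype.card I)
    (P : I → Option S → Option S → Prop) (hP : ∀ i, StrictPref (P i))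
    (q : S → ℕ) (hq : ∀ s, 1 ≤ q s)
    (pr : S → I → I → Prop) (hpr : ∀ s, PartialOrderRel (pr s))
    (μ : I → Option S) (hμ : IsMatching q μ) :
    StableFor P q pr μ ↔
      ∃ pr' : S → I → I → Prop, IsExtensionProfile pr pr' ∧ StableFor P q pr' μ := by
  
  constructor
  · rintro ⟨hIR, hNW, hF⟩
    -- irreflexivity of P i
    have hPirr : ∀ i (a : Option S), ¬ P i a a := fun i a h => (hP i).1 _ _ h h
    -- fairness in convenient form
    have hFair : ∀ i j s, P i (some s) (μ i) → μ j = some s → ¬ pr s i j := by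
      intro i j s hPi hj hpij
      have hine : μ i ≠ some s := fun e => hPirr i (some s) (e ▸ hPi)
      exact hF ⟨i, j, s, hj, hine, Or.inl hPi, hpij⟩
    -- the augmented relation per school
    set base : S → I → I → Prop :=
      fun s a b => pr s a b ∨ (μ a = some s ∧ P b (some s) (μ b)) with hbase
    have hDnotA : ∀ s (a : I), P a (some s) (μ a) → μ a ≠ some s :=
      fun s a h e => hPirr a (some s) (e ▸ h)
    have hQ' : ∀ s a b, Relation.TransGen (base s) a b →
        pr s a b ∨ ∃ x y, (a = x ∨ pr s a x) ∧ μ x = some s ∧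
          P y (some s) (μ y) ∧ (y = b ∨ pr s y b) := by
      intro s a b h
      induction h with
      | single h =>
        rcases h with h | ⟨hA, hD⟩
        · exact Or.inl h
        · exact Or.inr ⟨a, _, Or.inl rfl, hA, hD, Or.inl rfl⟩
      | tail hab hbc ih =>
        rename_i b c
        rcases ih with hab' | ⟨x, y, hax, hAx, hDy, hyb⟩
        · rcases hbc with h | ⟨hA, hD⟩
          · exact Or.inl ((hpr s).2 hab' h)
          · exact Or.inr ⟨b, c, Or.inr hab', hA, hD, Or.inl rfl⟩
        · rcases hbc with h | ⟨hA, hD⟩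
          · refine Or.inr ⟨x, y, hax, hAx, hDy, Or.inr ?_⟩
            rcases hyb with rfl | h'
            · exact h
            · exact (hpr s).2 h' h
          · exfalso
            rcases hyb with rfl | h'
            · exact hDnotA s y hDy hA
            · exact hFair y b s hDy hA h'
    have hQirr : ∀ s a, ¬ Relation.TransGen (base s) a a := by
      intro s a h
      rcases hQ' s a a h with h' | ⟨x, y, hax, hAx, hDy, hya⟩
      · exact (hpr s).1 _ _ h' h'
      · rcases hax with heq1 | h1
        · rcases hya with heq2 | h2
          · exact hDnotA s y hDy ((heq2.trans heq1).symm ▸ hAx)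
          · exact hFair y x s hDy hAx (heq1 ▸ h2)
        · rcases hya with heq2 | h2
          · exact hFair y x s hDy hAx (heq2.symm ▸ h1)
          · exact hFair y x s hDy hAx ((hpr s).2 h2 h1)
    have hQtrans : ∀ s, Transitive (Relation.TransGen (base s)) :=
      fun s _ _ _ h h' => h.trans h'
    have hQasymm : ∀ s, Asymm (Relation.TransGen (base s)) :=
      fun s a b h h' => hQirr s a (h.trans h')
    have hext : ∀ s : S, ∃ B', IsExtension (Relation.TransGen (base s)) B' :=
      fun s => strict_extend_aux _ (hQasymm s) (hQtrans s)
    choose pr' hpr' using hext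
    refine ⟨pr', fun s => ⟨(hpr' s).1, fun i j h =>
      (hpr' s).2 i j (Relation.TransGen.single (Or.inl h))⟩, hIR, hNW, ?_⟩
    rintro ⟨i, j, s, hj, hine, hR, hij⟩
    have hDi : P i (some s) (μ i) := by
      rcases hR with h | h
      · exact h
      · exact absurd h.symm hine
    have hji : pr' s j i :=
      (hpr' s).2 j i (Relation.TransGen.single (Or.inr ⟨hj, hDi⟩))
    exact (hpr' s).1.1.1.1 _ _ hji hij
  · rintro ⟨pr', hext, hIR, hNW, hF⟩
    refine ⟨hIR, hNW, ?_⟩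
    rintro ⟨i, j, s, hj, hine, hR, hij⟩
    exact hF ⟨i, j, s, hj, hine, hR, (hext s).2 i j hij⟩
end

section
/- Suppose ≻_s is a partial order (asymmetric and transitive) for every s ∈ S. Then every student optimal stable matching (SOSM) for ≻ is an SOSM for some extension profile ≻' of ≻. -/
/-- Corollary 2, SOSMs: with partial order priorities, every SOSM for `pr` is an
SOSM for some extension profile of `pr`. -/
theorem sosm_is_sosm_for_some_extension {I S : Type*} [Fintype I] [Fintype S]
    (hI : 3 ≤ Fintype.card I)
    (P : I → Option S → Option S → Prop) (hP : ∀ i, StrictPref (P i))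
    (q : S → ℕ) (hq : ∀ s, 1 ≤ q s)
    (pr : S → I → I → Prop) (hpr : ∀ s, PartialOrderRel (pr s))
    (μ : I → Option S) (hμ : IsMatching q μ) (hsosm : IsSOSM P q pr μ) :
    ∃ pr' : S → I → I → Prop, IsExtensionProfile pr pr' ∧ IsSOSM P q pr' μ := by
  classical
  -- For each school, build a total order extension avoiding envy pairs.
  have key : ∀ s : S, ∃ B' : I → I → Prop, IsExtension (pr s) B' ∧
      ∀ i j : I, μ j = some s → μ i ≠ some s → RPref (P i) (some s) (μ i) → ¬ B' i j := by
    intro s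
    have hB := hpr s
    have hfair : ∀ i j : I, μ j = some s → μ i ≠ some s → RPref (P i) (some s) (μ i) →
        ¬ pr s i j := by
      intro i j hj hi hR hij
      exact hsosm.1.2.2 ⟨i, j, s, hj, hi, hR, hij⟩
    set B : I → I → Prop := pr s with hBdef
    -- Q adds reversed envy edges
    set Q : I → I → Prop := fun a b =>
      B a b ∨ (μ a = some s ∧ μ b ≠ some s ∧ RPref (P b) (some s) (μ b)) with hQdef
    set T : I → I → Prop := Relation.TransGen Q with hTdef
    have lemA : ∀ a b, T a b → B a b ∨
        ∃ i, μ i ≠ some s ∧ RPref (P i) (some s) (μ i) ∧ (B i b ∨ i = b) := by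
      intro a b h
      induction h with
      | single hq =>
        rcases hq with hb | ⟨_, hi, hR⟩
        · exact Or.inl hb
        · exact Or.inr ⟨_, hi, hR, Or.inr rfl⟩
      | tail hT hq ih =>
        rcases hq with hbc | ⟨_, hcs, hRc⟩
        · rcases ih with hab | ⟨i, hi, hR, hib⟩
          · exact Or.inl (hB.2 hab hbc)
          · refine Or.inr ⟨i, hi, hR, Or.inl ?_⟩
            rcases hib with hib | rfl
            · exact hB.2 hib hbc
            · exact hbc
        · exact Or.inr ⟨_, hcs, hRc, Or.inr rfl⟩
    have lemB : ∀ a b, T a b → B a b ∨ ∃ j, μ j = some s ∧ (B a j ∨ a = j) := by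
      intro a b h
      induction h using Relation.TransGen.head_induction_on with
      | single hq =>
        rcases hq with hb | ⟨has, _, _⟩
        · exact Or.inl hb
        · exact Or.inr ⟨_, has, Or.inr rfl⟩
      | head hq hT ihc =>
        rcases hq with hac | ⟨has, _, _⟩
        · rcases ihc with hcb | ⟨j, hjs, hcj⟩
          · exact Or.inl (hB.2 hac hcb)
          · refine Or.inr ⟨j, hjs, Or.inl ?_⟩
            rcases hcj with hcj | rfl
            · exact hB.2 hac hcj
            · exact hac
        · exact Or.inr ⟨_, has, Or.inr rfl⟩
    have hirr : ∀ a, ¬ T a a := by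
      intro a hT
      rcases lemA a a hT with hba | ⟨i, hiNe, hiR, hia⟩
      · exact hB.1 a a hba hba
      rcases lemB a a hT with hba | ⟨j, hjs, haj⟩
      · exact hB.1 a a hba hba
      have hij : B i j ∨ i = j := by
        rcases hia with hia | rfl
        · rcases haj with haj | rfl
          · exact Or.inl (hB.2 hia haj)
          · exact Or.inl hia
        · rcases haj with haj | rfl
          · exact Or.inl haj
          · exact Or.inr rfl
      rcases hij with hij | rfl
      · exact hfair i j hjs hiNe hiR hij
      · exact hiNe hjs
    have hTtrans : Transitive T := fun a b c h1 h2 => Relation.TransGen.trans h1 h2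
    -- nonstrict partial order
    set ro : I → I → Prop := fun a b => T a b ∨ a = b with hrodef
    haveI : IsPartialOrder I ro := by
      refine { refl := fun a => Or.inr rfl, trans := ?_, antisymm := ?_ }
      · rintro a b c (h1 | rfl) (h2 | rfl)
        · exact Or.inl (hTtrans h1 h2)
        · exact Or.inl h1
        · exact Or.inl h2
        · exact Or.inr rfl
      · rintro a b h1 h2
        rcases h1 with h1 | rfl
        · rcases h2 with h2 | rfl
          · exact absurd (hTtrans h1 h2) (hirr a)
          · rfl
        · rfl
    obtain ⟨lo, hlin, hle⟩ := extend_partialOrder ro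
    haveI := hlin
    have hanti : ∀ a b : I, lo a b → lo b a → a = b := fun a b => antisymm
    have hltrans : ∀ a b c : I, lo a b → lo b c → lo a c := fun a b c h1 h2 =>
      Trans.trans h1 h2
    have htot : ∀ a b : I, lo a b ∨ lo b a := fun a b => total_of lo a b
    refine ⟨fun i j => lo i j ∧ i ≠ j, ⟨⟨⟨⟨?_, ?_⟩, ?_⟩, ?_⟩, ?_⟩, ?_⟩
    · -- Asymm
      rintro i j ⟨h1, hne⟩ ⟨h2, _⟩
      exact hne (hanti _ _ h1 h2)
    · -- Transitive
      rintro a b c ⟨h1, hne1⟩ ⟨h2, hne2⟩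
      refine ⟨hltrans _ _ _ h1 h2, ?_⟩
      rintro rfl
      exact hne1 (hanti _ _ h1 h2)
    · -- NegTransitive
      intro a b c hab hbc hac
      by_cases h1 : a = b
      · subst h1; exact hbc hac
      by_cases h2 : b = c
      · subst h2; exact hab hac
      have hba : lo b a := by
        rcases htot a b with h | h
        · exact absurd ⟨h, h1⟩ hab
        · exact h
      have hcb : lo c b := by
        rcases htot b c with h | h
        · exact absurd ⟨h, h2⟩ hbc
        · exact h
      exact hac.2 (hanti _ _ hac.1 (hltrans _ _ _ hcb hba))
    · -- complete
      intro a b hne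
      rcases htot a b with h | h
      · exact Or.inl ⟨h, hne⟩
      · exact Or.inr ⟨h, fun hh => hne hh.symm⟩
    · -- extension
      intro i j hij
      have hne : i ≠ j := by rintro rfl; exact hB.1 i i hij hij
      exact ⟨hle _ _ (Or.inl (Relation.TransGen.single (Or.inl hij))), hne⟩
    · -- avoids envy pairs
      rintro i j hj hi hR ⟨hlo, hne⟩
      have : lo j i := hle _ _ (Or.inl (Relation.TransGen.single (Or.inr ⟨hj, hi, hR⟩)))
      exact hne (hanti _ _ hlo this)
  choose pr' hext havoid using key
  have hsub : ∀ s i j, pr s i j → pr' s i j := fun s => (hext s).2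
  refine ⟨pr', hext, ⟨⟨hsosm.1.1, hsosm.1.2.1, ?_⟩, ?_⟩⟩
  · rintro ⟨i, j, s, hj, hi, hR, hij⟩
    exact havoid s i j hj hi hR hij
  · rintro ⟨μ', hm', ⟨hIR', hNW', hF'⟩, hdom⟩
    refine hsosm.2 ⟨μ', hm', ⟨hIR', hNW', ?_⟩, hdom⟩
    rintro ⟨i, j, s, hj, hi, hR, hij⟩
    exact hF' ⟨i, j, s, hj, hi, hR, hsub s i j hij⟩
end

section
/- Suppose ≻_s is a partial order (asymmetric and transitive) for every s ∈ S. Then there exists an extension profile ≻' of ≻ such that every student optimal stable matching (SOSM) for ≻' is an SOSM for ≻. -/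
section KOaux

private lemma KO_negTrans {I : Type*} {B : I → I → Prop} (ht : Transitive B)
    (hc : ∀ a b : I, a ≠ b → B a b ∨ B b a) :
    NegTransitive B := by
  intro a b c hab hbc hac
  rcases eq_or_ne a b with rfl | h1
  · exact hbc hac
  rcases eq_or_ne b c with rfl | h2
  · exact hab hac
  have hba : B b a := (hc a b h1).resolve_left hab
  have hcb : B c b := (hc b c h2).resolve_left hbc
  exact hab (ht hac hcb)

private lemma KO_exists_maximal {α : Type*} {B : α → α → Prop} (ht : Transitive B)
    (hirr : ∀ x, ¬ B x x) :
    ∀ (A : Finset α), A.Nonempty → ∃ x ∈ A, ∀ y ∈ A, ¬ B y x := by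
  classical
  intro A
  induction A using Finset.strongInduction with
  | _ A ih =>
    intro hne
    obtain ⟨a, ha⟩ := hne
    by_cases h : ∀ y ∈ A, ¬ B y a
    · exact ⟨a, ha, h⟩
    · push_neg at h
      obtain ⟨y, hy, hBya⟩ := h
      have hsub : A.filter (fun z => B z a) ⊂ A := by
        refine Finset.ssubset_iff_of_subset (Finset.filter_subset _ _) |>.mpr ?_
        exact ⟨a, ha, by simp [hirr a]⟩
      obtain ⟨x, hx, hmax⟩ := ih _ hsub ⟨y, by simp [hy, hBya]⟩
      have hx' := Finset.mem_filter.mp hx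
      refine ⟨x, hx'.1, fun z hz hBzx => ?_⟩
      exact hmax z (Finset.mem_filter.mpr ⟨hz, ht hBzx hx'.2⟩) hBzx

private lemma KO_exists_total_ext {α : Type*} {B : α → α → Prop} (hB : PartialOrderRel B) :
    ∃ L : α → α → Prop, TotalOrderRel L ∧ ∀ x y, B x y → L x y := by
  classical
  let r : α → α → Prop := fun x y => B x y ∨ x = y
  haveI : IsPartialOrder α r :=
    { refl := fun a => Or.inr rfl
      trans := by
        rintro a b c (hab | rfl) (hbc | rfl)
        · exact Or.inl (hB.2 hab hbc)
        · exact Or.inl hab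
        · exact Or.inl hbc
        · exact Or.inr rfl
      antisymm := by
        rintro a b (hab | rfl) (hba | h)
        · exact absurd hba (hB.1 a b hab)
        · exact h.symm
        · rfl
        · rfl }
  obtain ⟨s, hs, hrs⟩ := extend_partialOrder r
  have htr : ∀ {a b c}, s a b → s b c → s a c := fun h1 h2 => hs.trans _ _ _ h1 h2
  have hanti : ∀ {a b}, s a b → s b a → a = b := fun h1 h2 => hs.antisymm _ _ h1 h2
  have htot : ∀ a b, s a b ∨ s b a := fun a b => hs.total a b
  have hasym : Asymm (fun x y => s x y ∧ x ≠ y) := by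
    rintro x y ⟨h1, hne⟩ ⟨h2, -⟩
    exact hne (hanti h1 h2)
  have htrans : Transitive (fun x y => s x y ∧ x ≠ y) := by
    rintro x y z ⟨h1, hne1⟩ ⟨h2, hne2⟩
    refine ⟨htr h1 h2, fun h => ?_⟩
    subst h
    exact hne1 (hanti h1 h2)
  have hcomp : ∀ a b : α, a ≠ b → (s a b ∧ a ≠ b) ∨ (s b a ∧ b ≠ a) := by
    intro a b hab
    rcases htot a b with h | h
    · exact Or.inl ⟨h, hab⟩
    · exact Or.inr ⟨h, hab.symm⟩
  refine ⟨fun x y => s x y ∧ x ≠ y, ⟨⟨⟨hasym, htrans⟩, KO_negTrans htrans hcomp⟩, hcomp⟩, ?_⟩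
  intro x y hxy
  refine ⟨hrs x y (Or.inl hxy), fun h => ?_⟩
  subst h
  exact hB.1 x x hxy hxy

private lemma KO_ncard_filter {α : Type*} [Fintype α] (p : α → Prop) [DecidablePred p] :
    {i | p i}.ncard = (Finset.univ.filter p).card := by
  rw [Set.ncard_eq_toFinset_card', Set.toFinset_setOf]

end KOaux

/-- Corollary 3: with partial order priorities, there exists an extension
profile `pr'` of `pr` such that every SOSM for `pr'` is an SOSM for `pr`. -/
theorem exists_extension_whose_sosms_are_sosms {I S : Type*} [Fintype I] [Fintype S]
    (hI : 3 ≤ Fintype.card I)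
    (P : I → Option S → Option S → Prop) (hP : ∀ i, StrictPref (P i))
    (q : S → ℕ) (hq : ∀ s, 1 ≤ q s)
    (pr : S → I → I → Prop) (hpr : ∀ s, PartialOrderRel (pr s)) :
    ∃ pr' : S → I → I → Prop, IsExtensionProfile pr pr' ∧
      ∀ μ : I → Option S, IsMatching q μ → IsSOSM P q pr' μ → IsSOSM P q pr μ := by
  classical
  -- basic facts about preferences
  have Pasym : ∀ i (a b : Option S), P i a b → ¬ P i b a := fun i => (hP i).1
  have Pirr : ∀ i (a : Option S), ¬ P i a a := fun i a h => (hP i).1 a a h h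
  have Ptr : ∀ i, Transitive (P i) := fun i => (hP i).2.1
  have Ptot : ∀ i (a b : Option S), a ≠ b → P i a b ∨ P i b a := fun i => (hP i).2.2
  have PRtr : ∀ i (a b c : Option S), P i a b → RPref (P i) b c → P i a c := by
    rintro i a b c h1 (h2 | rfl)
    · exact Ptr i h1 h2
    · exact h1
  have RPtr : ∀ i (a b c : Option S), RPref (P i) a b → P i b c → P i a c := by
    rintro i a b c (h1 | rfl) h2
    · exact Ptr i h1 h2
    · exact h2
  have RRtr : ∀ i (a b c : Option S), RPref (P i) a b → RPref (P i) b c → RPref (P i) a c := by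
    rintro i a b c (h1 | rfl) h2
    · exact Or.inl (PRtr i a b c h1 h2)
    · exact h2
  -- rank / weight
  set rk : I → Option S → ℕ := fun i a => (Finset.univ.filter (fun b => RPref (P i) a b)).card
    with hrk_def
  have hrk_le : ∀ i (a b : Option S), RPref (P i) a b → rk i b ≤ rk i a := by
    intro i a b hab
    refine Finset.card_le_card ?_
    intro c hc
    simp only [Finset.mem_filter, Finset.mem_univ, true_and] at hc ⊢
    exact RRtr i a b c hab hc
  have hrk_lt : ∀ i (a b : Option S), P i a b → rk i b < rk i a := by
    intro i a b hab
    refine Finset.card_lt_card ?_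
    rw [Finset.ssubset_iff_of_subset]
    · refine ⟨a, ?_, ?_⟩
      · simp only [Finset.mem_filter, Finset.mem_univ, true_and]
        exact Or.inr rfl
      · simp only [Finset.mem_filter, Finset.mem_univ, true_and]
        rintro (h | rfl)
        · exact Pasym i a b hab h
        · exact Pirr i _ hab
    · intro c hc
      simp only [Finset.mem_filter, Finset.mem_univ, true_and] at hc ⊢
      exact RRtr i a b c (Or.inl hab) hc
  set W : (I → Option S) → ℕ := fun μ => ∑ i, rk i (μ i) with hW_def
  have hWlt : ∀ μ' μ : I → Option S, ParetoDominates P μ' μ → W μ < W μ' := by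
    rintro μ' μ ⟨hall, i0, hi0⟩
    exact Finset.sum_lt_sum (fun i _ => hrk_le i (μ' i) (μ i) (hall i))
      ⟨i0, Finset.mem_univ i0, hrk_lt i0 (μ' i0) (μ i0) hi0⟩
  -- the set of IR + pr-fair matchings, and a weight-maximal element ν of it
  set GF : Finset (I → Option S) :=
    Finset.univ.filter (fun μ => IsMatching q μ ∧ IndividuallyRational P μ ∧ Fair P pr μ)
    with hGF_def
  have hμ0 : (fun _ => (none : Option S)) ∈ GF := by
    refine Finset.mem_filter.mpr ⟨Finset.mem_univ _, ?_, ?_, ?_⟩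
    · intro s
      have : {i : I | (none : Option S) = some s} = ∅ := by
        ext i; simp
      rw [this]
      simp
    · intro i
      exact Or.inr rfl
    · rintro ⟨i, j, s, hj, -⟩
      simp at hj
  obtain ⟨ν, hνGF, hνmax⟩ := GF.exists_max_image W ⟨_, hμ0⟩
  obtain ⟨-, hνmatch, hνIR, hνFair⟩ := Finset.mem_filter.mp hνGF
  have hνdom : ∀ σ : I → Option S, IsMatching q σ → IndividuallyRational P σ → Fair P pr σ →
      ¬ ParetoDominates P σ ν := by
    intro σ h1 h2 h3 hd
    exact absurd (hνmax σ (Finset.mem_filter.mpr ⟨Finset.mem_univ _, h1, h2, h3⟩))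
      (not_le.mpr (hWlt σ ν hd))
  -- ν is non-wasteful, hence pr-stable
  have hνNW : NonWasteful P q ν := by
    intro i s hdes
    by_contra hne
    have hlt : {j : I | ν j = some s}.ncard < q s := lt_of_le_of_ne (hνmatch s) hne
    set D : Finset I :=
      Finset.univ.filter (fun x => P x (some s) (ν x)) with hD_def
    have hiD : i ∈ D := Finset.mem_filter.mpr ⟨Finset.mem_univ _, hdes⟩
    obtain ⟨x, hxD, hxmax⟩ := KO_exists_maximal (hpr s).2 (fun z h => (hpr s).1 z z h h) D ⟨i, hiD⟩
    have hxdes : P x (some s) (ν x) := (Finset.mem_filter.mp hxD).2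
    have hxne : ν x ≠ some s := fun h => Pirr x _ (h ▸ hxdes)
    set ν' : I → Option S := Function.update ν x (some s) with hν'_def
    have hν'x : ν' x = some s := Function.update_self x _ ν
    have hν'other : ∀ j, j ≠ x → ν' j = ν j := fun j hj => Function.update_of_ne hj _ _
    have hν'match : IsMatching q ν' := by
      intro t
      by_cases hts : t = s
      · have hsub : {j : I | ν' j = some t} ⊆ insert x {j : I | ν j = some t} := by
          intro j hj
          rw [Set.mem_setOf_eq] at hj
          rcases eq_or_ne j x with rfl | hjx
          · exact Set.mem_insert _ _
          · refine Set.mem_insert_of_mem _ ?_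
            rw [Set.mem_setOf_eq, ← hν'other j hjx]
            exact hj
        calc {j : I | ν' j = some t}.ncard ≤ (insert x {j : I | ν j = some t}).ncard :=
              Set.ncard_le_ncard hsub (Set.toFinite _)
          _ ≤ {j : I | ν j = some t}.ncard + 1 := Set.ncard_insert_le _ _
          _ ≤ q t := by rw [hts]; exact hlt
      · have hsub : {j : I | ν' j = some t} ⊆ {j : I | ν j = some t} := by
          intro j hj
          by_cases hjx : j = x
          · rw [Set.mem_setOf_eq, hjx, hν'x] at hj
            exact absurd (Option.some_inj.mp hj).symm hts
          · rwa [Set.mem_setOf_eq, hν'other j hjx] at hj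
        exact le_trans (Set.ncard_le_ncard hsub (Set.toFinite _)) (hνmatch t)
    have hν'IR : IndividuallyRational P ν' := by
      intro j
      by_cases hjx : j = x
      · rw [hjx, hν'x]
        exact Or.inl (PRtr _ _ _ _ hxdes (hνIR _))
      · rw [hν'other j hjx]
        exact hνIR j
    have hν'Fair : Fair P pr ν' := by
      rintro ⟨y, j, t, hjt, hynt, hydes, hpryj⟩
      by_cases hjx : j = x
      · rw [hjx, hν'x] at hjt
        have hts : s = t := Option.some_inj.mp hjt
        have hyx : y ≠ x := by
          intro h
          apply hynt
          rw [h, hν'x, hts]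
        rw [hν'other y hyx] at hynt hydes
        rw [← hts] at hynt hydes
        have hydes' : P y (some s) (ν y) := by
          rcases hydes with h | h
          · exact h
          · exact absurd h.symm hynt
        rw [hjx] at hpryj
        rw [← hts] at hpryj
        exact hxmax y (Finset.mem_filter.mpr ⟨Finset.mem_univ _, hydes'⟩) hpryj
      · have hjν : ν j = some t := by rw [← hν'other j hjx]; exact hjt
        by_cases hyx : y = x
        · rw [hyx] at hynt hydes hpryj
          rw [hν'x] at hynt hydes
          have hPts : P x (some t) (some s) := by
            rcases hydes with h | h
            · exact h
            · exact absurd h.symm hynt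
          have hPty : P x (some t) (ν x) := Ptr x hPts hxdes
          have hynt' : ν x ≠ some t := fun h => Pirr x _ (h ▸ hPty)
          exact hνFair ⟨x, j, t, hjν, hynt', Or.inl hPty, hpryj⟩
        · rw [hν'other y hyx] at hynt hydes
          exact hνFair ⟨y, j, t, hjν, hynt, hydes, hpryj⟩
    have hν'dom : ParetoDominates P ν' ν := by
      refine ⟨fun j => ?_, x, ?_⟩
      · by_cases hjx : j = x
        · rw [hjx, hν'x]
          exact Or.inl hxdes
        · rw [hν'other j hjx]
          exact Or.inr rfl
      · rw [hν'x]
        exact hxdes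
    exact hνdom ν' hν'match hν'IR hν'Fair hν'dom
  -- build the extension pr'
  set Rs : S → I → Prop := fun s i => ν i = some s with hRs_def
  set Up : S → I → Prop := fun s x => ¬ Rs s x ∧ ∃ j, ν j = some s ∧ pr s x j with hUp_def
  set Top : S → I → Prop := fun s x => Rs s x ∨ Up s x with hTop_def
  choose L hLtot hLext using fun s => KO_exists_total_ext (hpr s)
  set pr' : S → I → I → Prop :=
    fun s x y => (Top s x ∧ ¬ Top s y) ∨ ((Top s x ↔ Top s y) ∧ L s x y) with hpr'_def
  have hLasym : ∀ s, Asymm (L s) := fun s => (hLtot s).1.1.1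
  have hLtr : ∀ s, Transitive (L s) := fun s => (hLtot s).1.1.2
  have hLcomp : ∀ s (a b : I), a ≠ b → L s a b ∨ L s b a := fun s => (hLtot s).2
  have hTopClosed : ∀ s x y, pr s x y → Top s y → Top s x := by
    intro s x y hxy hy
    by_cases hx : Rs s x
    · exact Or.inl hx
    right
    refine ⟨hx, ?_⟩
    rcases hy with hyR | ⟨-, j, hj, hyj⟩
    · exact ⟨y, hyR, hxy⟩
    · exact ⟨j, hj, (hpr s).2 hxy hyj⟩
  have hext : ∀ s x y, pr s x y → pr' s x y := by
    intro s x y h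
    by_cases hy : Top s y
    · exact Or.inr ⟨iff_of_true (hTopClosed s x y h hy) hy, hLext s x y h⟩
    · by_cases hx : Top s x
      · exact Or.inl ⟨hx, hy⟩
      · exact Or.inr ⟨iff_of_false hx hy, hLext s x y h⟩
  have hpr'asym : ∀ s, Asymm (pr' s) := by
    rintro s x y (⟨hx, hy⟩ | ⟨hiff, hL⟩) (⟨hx', hy'⟩ | ⟨hiff', hL'⟩)
    · exact hy hx'
    · exact hy (hiff'.mpr hx)
    · exact hy' (hiff.mpr hx')
    · exact hLasym s x y hL hL'
  have hpr'trans : ∀ s, Transitive (pr' s) := by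
    rintro s x y z (⟨hx, hy⟩ | ⟨hiff, hL⟩) (⟨hy', hz⟩ | ⟨hiff', hL'⟩)
    · exact absurd hy' hy
    · exact Or.inl ⟨hx, fun hz => hy (hiff'.mpr hz)⟩
    · exact Or.inl ⟨hiff.mpr hy', hz⟩
    · exact Or.inr ⟨hiff.trans hiff', hLtr s hL hL'⟩
  have hpr'comp : ∀ s (a b : I), a ≠ b → pr' s a b ∨ pr' s b a := by
    intro s a b hab
    by_cases ha : Top s a <;> by_cases hb : Top s b
    · rcases hLcomp s a b hab with h | h
      · exact Or.inl (Or.inr ⟨iff_of_true ha hb, h⟩)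
      · exact Or.inr (Or.inr ⟨iff_of_true hb ha, h⟩)
    · exact Or.inl (Or.inl ⟨ha, hb⟩)
    · exact Or.inr (Or.inl ⟨hb, ha⟩)
    · rcases hLcomp s a b hab with h | h
      · exact Or.inl (Or.inr ⟨iff_of_false ha hb, h⟩)
      · exact Or.inr (Or.inr ⟨iff_of_false hb ha, h⟩)
  have hpr'total : ∀ s, TotalOrderRel (pr' s) := fun s =>
    ⟨⟨⟨hpr'asym s, hpr'trans s⟩, KO_negTrans (hpr'trans s) (hpr'comp s)⟩, hpr'comp s⟩
  have hbeats : ∀ s x y, pr' s x y → Top s y → Top s x := by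
    rintro s x y (⟨hx, hy⟩ | ⟨hiff, -⟩) hTy
    · exact absurd hTy hy
    · exact hiff.mpr hTy
  refine ⟨pr', fun s => ⟨hpr'total s, hext s⟩, ?_⟩
  -- main implication
  intro μ hμmatch hμSOSM
  obtain ⟨⟨hμIR, hμNW, hμFair'⟩, hμopt⟩ := hμSOSM
  have hμFair : Fair P pr μ := by
    rintro ⟨i, j, s, h1, h2, h3, h4⟩
    exact hμFair' ⟨i, j, s, h1, h2, h3, hext s i j h4⟩
  set UF : Finset I := Finset.univ.filter (fun i => P i (ν i) (μ i)) with hUF_def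
  set NresF : S → Finset I := fun s => Finset.univ.filter (fun i => ν i = some s) with hN_def
  set MresF : S → Finset I := fun s => Finset.univ.filter (fun i => μ i = some s) with hM_def
  have hMcard : ∀ s, {i : I | μ i = some s}.ncard = (MresF s).card := fun s =>
    KO_ncard_filter _
  have hNcard : ∀ s, {i : I | ν i = some s}.ncard = (NresF s).card := fun s =>
    KO_ncard_filter _
  have hUν : ∀ u ∈ UF, ∃ s, ν u = some s := by
    intro u hu
    have hu' : P u (ν u) (μ u) := (Finset.mem_filter.mp hu).2
    cases hν : ν u with
    | none =>
      exfalso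
      rw [hν] at hu'
      exact Pirr u none (PRtr u _ _ _ hu' (hμIR u))
    | some s => exact ⟨s, rfl⟩
  have hUpU : ∀ s j, Up s j → μ j = some s → j ∈ UF := by
    rintro s j ⟨hjR, j', hj', hprjj'⟩ hμj
    have hnodes : ¬ RPref (P j) (some s) (ν j) := fun hd =>
      hνFair ⟨j, j', s, hj', hjR, hd, hprjj'⟩
    have hne : (some s : Option S) ≠ ν j := fun h => hnodes (Or.inr h)
    have hPν : P j (ν j) (some s) :=
      (Ptot j _ _ hne).resolve_left (fun h => hnodes (Or.inl h))
    refine Finset.mem_filter.mpr ⟨Finset.mem_univ _, ?_⟩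
    rw [hμj]
    exact hPν
  have hUF_empty : UF = ∅ := by
    by_contra hUF_ne
    have hUne : UF.Nonempty := Finset.nonempty_iff_ne_empty.mpr hUF_ne
    -- everyone in MresF s is in Top s, whenever someone in UF enters s
    have hMtop : ∀ s, (UF ∩ NresF s).Nonempty → ∀ j ∈ MresF s, Top s j := by
      rintro s ⟨u, hu⟩ j hj
      obtain ⟨huU, huN⟩ := Finset.mem_inter.mp hu
      have huP : P u (ν u) (μ u) := (Finset.mem_filter.mp huU).2
      have huν : ν u = some s := (Finset.mem_filter.mp huN).2
      have hudes : P u (some s) (μ u) := huν ▸ huP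
      have hμune : μ u ≠ some s := fun h => Pirr u _ (h ▸ hudes)
      have hμj : μ j = some s := (Finset.mem_filter.mp hj).2
      have huj : u ≠ j := fun h => hμune (h ▸ hμj)
      have hnotuj : ¬ pr' s u j := fun h =>
        hμFair' ⟨u, j, s, hμj, hμune, Or.inl hudes, h⟩
      have hju : pr' s j u := (hpr'comp s u j huj).resolve_left hnotuj
      exact hbeats s j u hju (Or.inl huν)
    have hdesU : ∀ s, (UF ∩ NresF s).Nonempty →
        ∃ u, u ∈ UF ∧ P u (some s) (μ u) := by
      rintro s ⟨u, hu⟩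
      obtain ⟨huU, huN⟩ := Finset.mem_inter.mp hu
      have huP : P u (ν u) (μ u) := (Finset.mem_filter.mp huU).2
      have huν : ν u = some s := (Finset.mem_filter.mp huN).2
      exact ⟨u, huU, huν ▸ huP⟩
    have hkey : ∀ s, (UF ∩ NresF s).card ≤ (UF ∩ MresF s).card := by
      intro s
      rcases (UF ∩ NresF s).eq_empty_or_nonempty with he | hne
      · simp [he]
      obtain ⟨u, huU, hudes⟩ := hdesU s hne
      have hfull : (MresF s).card = q s := by
        rw [← hMcard s]
        exact hμNW u s hudes
      have hNle : (NresF s).card ≤ q s := by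
        rw [← hNcard s]
        exact hνmatch s
      have h1 : UF ∩ NresF s ⊆ NresF s \ MresF s := by
        intro j hj
        obtain ⟨hjU, hjN⟩ := Finset.mem_inter.mp hj
        refine Finset.mem_sdiff.mpr ⟨hjN, fun hjM => ?_⟩
        have hjP : P j (ν j) (μ j) := (Finset.mem_filter.mp hjU).2
        have hνj : ν j = some s := (Finset.mem_filter.mp hjN).2
        have hμj : μ j = some s := (Finset.mem_filter.mp hjM).2
        rw [hνj, hμj] at hjP
        exact Pirr j _ hjP
      have h2 : MresF s \ NresF s ⊆ UF ∩ MresF s := by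
        intro j hj
        obtain ⟨hjM, hjnN⟩ := Finset.mem_sdiff.mp hj
        have hTopj : Top s j := hMtop s hne j hjM
        rcases hTopj with hjR | hjUp
        · exact absurd (Finset.mem_filter.mpr ⟨Finset.mem_univ _, hjR⟩) hjnN
        · exact Finset.mem_inter.mpr
            ⟨hUpU s j hjUp (Finset.mem_filter.mp hjM).2, hjM⟩
      have e1 := Finset.card_sdiff_add_card_inter (NresF s) (MresF s)
      have e2 := Finset.card_sdiff_add_card_inter (MresF s) (NresF s)
      have e3 : (NresF s ∩ MresF s).card = (MresF s ∩ NresF s).card := by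
        rw [Finset.inter_comm]
      have c1 : (UF ∩ NresF s).card ≤ (NresF s \ MresF s).card := Finset.card_le_card h1
      have c2 : (MresF s \ NresF s).card ≤ (UF ∩ MresF s).card := Finset.card_le_card h2
      omega
    -- sum over schools
    have hfibν : ∀ s, UF.filter (fun i => ν i = some s) = UF ∩ NresF s := by
      intro s
      ext i
      simp only [Finset.mem_filter, Finset.mem_inter, hN_def, Finset.mem_univ, true_and]
    have hfibμ : ∀ s, UF.filter (fun i => μ i = some s) = UF ∩ MresF s := by
      intro s
      ext i
      simp only [Finset.mem_filter, Finset.mem_inter, hM_def, Finset.mem_univ, true_and]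
    have hsumN : UF.card = ∑ s : S, (UF ∩ NresF s).card := by
      have h := Finset.card_eq_sum_card_fiberwise
        (f := fun i => ν i) (s := UF) (t := (Finset.univ : Finset (Option S)))
        (fun x _ => Finset.mem_univ _)
      rw [h, Fintype.sum_option]
      have h0 : (UF.filter (fun i => ν i = none)).card = 0 := by
        rw [Finset.card_eq_zero, Finset.filter_eq_empty_iff]
        intro u hu hnone
        obtain ⟨s, hs⟩ := hUν u hu
        rw [hs] at hnone
        exact Option.some_ne_none s hnone
      rw [h0, zero_add]
      exact Finset.sum_congr rfl (fun s _ => by rw [hfibν s])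
    have hsumM : ∑ s : S, (UF ∩ MresF s).card ≤ UF.card := by
      have h := Finset.card_eq_sum_card_fiberwise
        (f := fun i => μ i) (s := UF) (t := (Finset.univ : Finset (Option S)))
        (fun x _ => Finset.mem_univ _)
      rw [h, Fintype.sum_option]
      have he : ∑ s : S, (UF ∩ MresF s).card = ∑ s : S, (UF.filter (fun i => μ i = some s)).card :=
        Finset.sum_congr rfl (fun s _ => by rw [hfibμ s])
      rw [he]
      exact Nat.le_add_left _ _
    have hkeyeq : ∀ s, (UF ∩ NresF s).card = (UF ∩ MresF s).card := by
      have hle : ∑ s : S, (UF ∩ NresF s).card ≤ ∑ s : S, (UF ∩ MresF s).card :=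
        Finset.sum_le_sum (fun s _ => hkey s)
      have heq : ∑ s : S, (UF ∩ NresF s).card = ∑ s : S, (UF ∩ MresF s).card := by
        omega
      intro s
      exact (Finset.sum_eq_sum_iff_of_le (fun s _ => hkey s)).mp heq s (Finset.mem_univ s)
    -- the improved matching τ
    set τ : I → Option S := fun i => if i ∈ UF then ν i else μ i with hτ_def
    have hτR : ∀ i, RPref (P i) (τ i) (μ i) := by
      intro i
      by_cases hi : i ∈ UF
      · simp only [hτ_def, if_pos hi]
        exact Or.inl (Finset.mem_filter.mp hi).2
      · simp only [hτ_def, if_neg hi]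
        exact Or.inr rfl
    have hτfiber : ∀ s, Finset.univ.filter (fun i => τ i = some s)
        = (MresF s \ UF) ∪ (UF ∩ NresF s) := by
      intro s
      ext i
      by_cases hi : i ∈ UF <;>
        simp only [hτ_def, Finset.mem_filter, Finset.mem_univ, true_and, if_pos, if_neg,
          Finset.mem_union, Finset.mem_sdiff, Finset.mem_inter, hi, hN_def, hM_def,
          if_true, if_false] <;> tauto
    have hτcard : ∀ s, (Finset.univ.filter (fun i => τ i = some s)).card = (MresF s).card := by
      intro s
      rw [hτfiber s, Finset.card_union_of_disjoint]
      · have e1 := Finset.card_sdiff_add_card_inter (MresF s) UF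
        have e2 := hkeyeq s
        have e3 : (UF ∩ MresF s).card = (MresF s ∩ UF).card := by rw [Finset.inter_comm]
        omega
      · rw [Finset.disjoint_left]
        intro a ha hb
        exact (Finset.mem_sdiff.mp ha).2 (Finset.mem_inter.mp hb).1
    have hτncard : ∀ s, {i : I | τ i = some s}.ncard = (MresF s).card := by
      intro s
      rw [KO_ncard_filter]
      exact hτcard s
    have hτmatch : IsMatching q τ := by
      intro s
      rw [hτncard s, ← hMcard s]
      exact hμmatch s
    have hτIR : IndividuallyRational P τ := by
      intro i
      by_cases hi : i ∈ UF
      · simp only [hτ_def, if_pos hi]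
        exact hνIR i
      · simp only [hτ_def, if_neg hi]
        exact hμIR i
    have hτNW : NonWasteful P q τ := by
      intro i s hdes
      have hdesμ : P i (some s) (μ i) := PRtr i _ _ _ hdes (hτR i)
      rw [hτncard s, ← hMcard s]
      exact hμNW i s hdesμ
    have hτFair : Fair P pr' τ := by
      rintro ⟨x, j, s, hjs, hxs, hdes, hpxj⟩
      have hsx : (some s : Option S) ≠ τ x := fun h => hxs h.symm
      have hPsx : P x (some s) (τ x) := hdes.resolve_right hsx
      have hdesμ : P x (some s) (μ x) := PRtr x _ _ _ hPsx (hτR x)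
      have hμxs : μ x ≠ some s := fun h => Pirr x _ (h ▸ hdesμ)
      by_cases hjU : j ∈ UF
      · have hνj : ν j = some s := by
          have : τ j = ν j := by simp only [hτ_def, if_pos hjU]
          rw [← this]
          exact hjs
        have hxTop : Top s x := hbeats s x j hpxj (Or.inl hνj)
        rcases hxTop with hxR | hxUp
        · by_cases hxU : x ∈ UF
          · refine hxs ?_
            simp only [hτ_def, if_pos hxU]
            exact hxR
          · refine hxU (Finset.mem_filter.mpr ⟨Finset.mem_univ _, ?_⟩)
            rw [hRs_def] at hxR
            rw [hxR]
            exact hdesμ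
        · obtain ⟨hxnR, j', hj', hprxj'⟩ := hxUp
          have hnodes : ¬ RPref (P x) (some s) (ν x) := fun hd =>
            hνFair ⟨x, j', s, hj', hxnR, hd, hprxj'⟩
          have hPνx : P x (ν x) (some s) :=
            (Ptot x _ _ (fun h => hnodes (Or.inr h))).resolve_left (fun h => hnodes (Or.inl h))
          have hxU : x ∈ UF :=
            Finset.mem_filter.mpr ⟨Finset.mem_univ _, Ptr x hPνx hdesμ⟩
          refine hnodes ?_
          have : τ x = ν x := by simp only [hτ_def, if_pos hxU]
          rw [← this]
          exact hdes
      · have hμj : μ j = some s := by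
          have : τ j = μ j := by simp only [hτ_def, if_neg hjU]
          rw [← this]
          exact hjs
        exact hμFair' ⟨x, j, s, hμj, hμxs, Or.inl hdesμ, hpxj⟩
    obtain ⟨u, hu⟩ := hUne
    refine hμopt ⟨τ, hτmatch, ⟨hτIR, hτNW, hτFair⟩, hτR, u, ?_⟩
    have : τ u = ν u := by simp only [hτ_def, if_pos hu]
    rw [this]
    exact (Finset.mem_filter.mp hu).2
  -- U empty: μ weakly dominates ν, so μ is a pr-SOSM
  have hRμν : ∀ i, RPref (P i) (μ i) (ν i) := by
    intro i
    have hnot : ¬ P i (ν i) (μ i) := by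
      intro h
      have : i ∈ UF := Finset.mem_filter.mpr ⟨Finset.mem_univ _, h⟩
      rw [hUF_empty] at this
      exact Finset.notMem_empty i this
    rcases eq_or_ne (μ i) (ν i) with h | h
    · exact Or.inr h
    · exact Or.inl ((Ptot i _ _ h).resolve_right hnot)
  refine ⟨⟨hμIR, hμNW, hμFair⟩, ?_⟩
  rintro ⟨σ, hσm, ⟨hσIR, hσNW, hσFair⟩, hσall, i0, hi0⟩
  refine hνdom σ hσm hσIR hσFair ⟨fun i => RRtr i _ _ _ (hσall i) (hRμν i), i0, ?_⟩
  exact PRtr i0 _ _ _ hi0 (hRμν i0)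
end

section
/- Suppose ≻_s is a weak order (asymmetric, transitive and negatively transitive) for every s ∈ S. Then for every student optimal stable matching (SOSM) μ for ≻ there exists an extension profile ≻' of ≻ obtained by a single tiebreaking rule such that μ is an SOSM for ≻'. -/
section Aux

variable {I : Type*}

lemma rpref_trans {S : Type*} {P : Option S → Option S → Prop} (hP : StrictPref P)
    {a b c : Option S} (h1 : RPref P a b) (h2 : RPref P b c) : RPref P a c := by
  rcases h1 with h1 | rfl
  · rcases h2 with h2 | rfl
    · exact Or.inl (hP.2.1 h1 h2)
    · exact Or.inl h1
  · exact h2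

lemma rpref_antisymm {S : Type*} {P : Option S → Option S → Prop} (hP : StrictPref P)
    {a b : Option S} (h1 : RPref P a b) (h2 : RPref P b a) : a = b := by
  rcases h1 with h1 | rfl
  · rcases h2 with h2 | rfl
    · exact absurd h2 (hP.1 _ _ h1)
    · rfl
  · rfl

lemma negtrans_of_total {T : I → I → Prop} (hA : Asymm T) (hT : Transitive T)
    (hC : ∀ a b : I, a ≠ b → T a b ∨ T b a) : NegTransitive T := by
  intro a b c hab hbc hac
  rcases eq_or_ne a b with rfl | hne
  · exact hbc hac
  · rcases hC a b hne with h | h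
    · exact hab h
    · exact hbc (hT h hac)

/-- Sort a linear order into an enumeration. -/
lemma exists_enum_linear [Fintype I] (t : I → I → Prop) (ht : IsLinearOrder I t) :
    ∃ e : Fin (Fintype.card I) ≃ I, ∀ a b : Fin (Fintype.card I), t (e a) (e b) ↔ a ≤ b := by
  classical
  haveI := ht
  letI : DecidableRel t := Classical.decRel t
  set l : List I := Finset.univ.sort t with hl
  have hnd : l.Nodup := Finset.sort_nodup Finset.univ t
  have hmem : ∀ x : I, x ∈ l := fun x => (Finset.mem_sort t).2 (Finset.mem_univ x)
  have hsorted : List.Pairwise t l := Finset.pairwise_sort Finset.univ t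
  have hlen : l.length = Fintype.card I := by
    rw [hl, Finset.length_sort, Finset.card_univ]
  set e0 : Fin l.length ≃ I := hnd.getEquivOfForallMemList l hmem with he0
  have he0a : ∀ a : Fin l.length, e0 a = l.get a := fun a => rfl
  refine ⟨(finCongr hlen.symm).trans e0, ?_⟩
  intro a b
  have hpair : ∀ i j : Fin l.length, i < j → t (l.get i) (l.get j) := by
    intro i j hij
    exact List.pairwise_iff_get.1 hsorted i j hij
  constructor
  · intro h
    by_contra hba
    push_neg at hba
    have hba' : (finCongr hlen.symm) b < (finCongr hlen.symm) a := by
      simpa using hba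
    have h2 : t (e0 ((finCongr hlen.symm) b)) (e0 ((finCongr hlen.symm) a)) :=
      hpair _ _ hba'
    have heq : e0 ((finCongr hlen.symm) a) = e0 ((finCongr hlen.symm) b) :=
      ht.toIsPartialOrder.toAntisymm.antisymm _ _ h h2
    have hv : (a : ℕ) = (b : ℕ) := by
      simpa using congrArg Fin.val (e0.injective heq)
    omega
  · intro h
    rcases eq_or_lt_of_le h with rfl | hlt
    · exact ht.toIsPartialOrder.toIsPreorder.toRefl.refl _
    · have hlt' : (finCongr hlen.symm) a < (finCongr hlen.symm) b := by simpa using hlt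
      exact hpair _ _ hlt'

/-- Linear extension of an acyclic relation into a `Fin`-valued ranking. -/
lemma exists_rank [Fintype I] (E : I → I → Prop)
    (hirr : ∀ x, ¬ Relation.TransGen E x x) :
    ∃ r : I ≃ Fin (Fintype.card I), ∀ i j, E i j → r i < r j := by
  classical
  set L : I → I → Prop := fun a b => Relation.TransGen E a b ∨ a = b with hL
  haveI : IsPartialOrder I L := by
    refine { refl := fun a => Or.inr rfl, trans := ?_, antisymm := ?_ }
    · intro a b c hab hbc
      rcases hab with hab | rfl
      · rcases hbc with hbc | rfl
        · exact Or.inl (hab.trans hbc)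
        · exact Or.inl hab
      · exact hbc
    · intro a b hab hba
      rcases hab with hab | rfl
      · rcases hba with hba | rfl
        · exact absurd (hab.trans hba) (hirr a)
        · rfl
      · rfl
  obtain ⟨t, htlin, hext⟩ := extend_partialOrder L
  obtain ⟨e, he⟩ := exists_enum_linear t htlin
  refine ⟨e.symm, ?_⟩
  intro i j hij
  have hne : i ≠ j := by
    rintro rfl
    exact hirr i (Relation.TransGen.single hij)
  have ht : t i j := hext _ _ (Or.inl (Relation.TransGen.single hij))
  have hle : e.symm i ≤ e.symm j := by
    have := (he (e.symm i) (e.symm j))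
    simp only [Equiv.apply_symm_apply] at this
    exact this.1 ht
  rcases eq_or_lt_of_le hle with heq | hlt
  · exact absurd (e.symm.injective heq) hne
  · exact hlt

end Aux
section Aux2

variable {I : Type*}

/-- The tiebroken order. -/
def Tiebreak [Fintype I] (B : I → I → Prop) (r : I ≃ Fin (Fintype.card I)) :
    I → I → Prop :=
  fun i j => B i j ∨ (¬ B i j ∧ ¬ B j i ∧ r i < r j)

lemma tiebreak_total [Fintype I] {B : I → I → Prop} (hB : WeakOrderRel B)
    (r : I ≃ Fin (Fintype.card I)) : TotalOrderRel (Tiebreak B r) := by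
  obtain ⟨⟨hasym, htrans⟩, hneg⟩ := hB
  have hAsymm : Asymm (Tiebreak B r) := by
    rintro i j (h | ⟨h1, h2, h3⟩) (h' | ⟨h1', h2', h3'⟩)
    · exact hasym _ _ h h'
    · exact h2' h
    · exact h2 h'
    · exact absurd h3' (lt_asymm h3)
  have hTrans : Transitive (Tiebreak B r) := by
    rintro i j k (hij | ⟨h1, h2, h3⟩) (hjk | ⟨h1', h2', h3'⟩)
    · exact Or.inl (htrans hij hjk)
    · left
      by_contra hik
      exact (hneg i k j hik h2') hij
    · left
      by_contra hik
      exact (hneg j i k h2 hik) hjk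
    · refine Or.inr ⟨?_, ?_, h3.trans h3'⟩
      · exact hneg i j k h1 h1'
      · exact hneg k j i h2' h2
  have hTot : ∀ a b : I, a ≠ b → Tiebreak B r a b ∨ Tiebreak B r b a := by
    intro a b hab
    by_cases h1 : B a b
    · exact Or.inl (Or.inl h1)
    by_cases h2 : B b a
    · exact Or.inr (Or.inl h2)
    rcases lt_or_gt_of_ne (fun h => hab (r.injective h)) with h | h
    · exact Or.inl (Or.inr ⟨h1, h2, h⟩)
    · exact Or.inr (Or.inr ⟨h2, h1, h⟩)
  exact ⟨⟨⟨hAsymm, hTrans⟩, negtrans_of_total hAsymm hTrans hTot⟩, hTot⟩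

/-- Enumerate a total order. -/
lemma exists_enum_total [Fintype I] {T : I → I → Prop} (hT : TotalOrderRel T) :
    ∃ e : Fin (Fintype.card I) ≃ I, InducedOrder e = T := by
  obtain ⟨⟨⟨hasym, htrans⟩, _⟩, htot⟩ := hT
  set t : I → I → Prop := fun a b => T a b ∨ a = b with hts
  have hlin : IsLinearOrder I t := by
    refine { refl := fun a => Or.inr rfl, trans := ?_, antisymm := ?_, total := ?_ }
    · rintro a b c (hab | rfl) (hbc | rfl)
      · exact Or.inl (htrans hab hbc)
      · exact Or.inl hab
      · exact Or.inl hbc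
      · exact Or.inr rfl
    · rintro a b (hab | rfl) hba
      · rcases hba with hba | rfl
        · exact absurd hba (hasym _ _ hab)
        · rfl
      · rfl
    · intro a b
      rcases eq_or_ne a b with rfl | hne
      · exact Or.inl (Or.inr rfl)
      · rcases htot a b hne with h | h
        · exact Or.inl (Or.inl h)
        · exact Or.inr (Or.inl h)
  obtain ⟨e, he⟩ := exists_enum_linear t hlin
  refine ⟨e, ?_⟩
  funext i j
  have key : e.symm i < e.symm j ↔ T i j := by
    constructor
    · intro h
      have := (he (e.symm i) (e.symm j))
      simp only [Equiv.apply_symm_apply] at this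
      rcases this.2 h.le with h' | h'
      · exact h'
      · exact absurd (h' ▸ h) (lt_irrefl _)
    · intro h
      have hne : i ≠ j := fun hij => hasym _ _ h (hij ▸ h)
      have := (he (e.symm i) (e.symm j))
      simp only [Equiv.apply_symm_apply] at this
      have hle := this.1 (Or.inl h)
      rcases eq_or_lt_of_le hle with heq | hlt
      · exact absurd (e.symm.injective heq) hne
      · exact hlt
  simp only [InducedOrder]
  exact propext key

/-- Membership in the "remaining" set. -/
lemma remaining_mem [Fintype I] (e : Fin (Fintype.card I) ≃ I)
    (t : Fin (Fintype.card I)) (i : I) :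
    (∀ t' : Fin (Fintype.card I), t' < t → e t' ≠ i) ↔ t ≤ e.symm i := by
  constructor
  · intro h
    by_contra hlt
    push_neg at hlt
    exact h _ hlt (e.apply_symm_apply i)
  · intro h t' ht' heq
    have : t' = e.symm i := by rw [← heq, Equiv.symm_apply_apply]
    omega

lemma smo_of_enum [Fintype I] {B : I → I → Prop} (hB : WeakOrderRel B)
    (r : I ≃ Fin (Fintype.card I)) (e : Fin (Fintype.card I) ≃ I)
    (he : InducedOrder e = Tiebreak B r) :
    IsRTiebreakSMOSeq B r e := by
  have hT : ∀ i j, (e.symm i < e.symm j) ↔ Tiebreak B r i j := by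
    intro i j
    rw [← he]; rfl
  constructor
  · intro t
    refine ⟨?_, ?_⟩
    · simp only [Set.mem_setOf_eq]
      rw [remaining_mem]
      simp
    · intro j hj hne hBj
      simp only [Set.mem_setOf_eq] at hj
      rw [remaining_mem] at hj
      have : e.symm j < e.symm (e t) := (hT j (e t)).2 (Or.inl hBj)
      simp only [Equiv.symm_apply_apply] at this
      omega
  · intro t i hi
    obtain ⟨hi1, hi2⟩ := hi
    simp only [Set.mem_setOf_eq] at hi1
    rw [remaining_mem] at hi1
    rcases eq_or_lt_of_le hi1 with heq | hlt
    · have : i = e t := by rw [heq, Equiv.apply_symm_apply]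
      rw [this]
    · have htie : Tiebreak B r (e t) i := by
        rw [← hT]
        simpa using hlt
      rcases htie with hBi | ⟨_, _, hr⟩
      · exfalso
        refine hi2 (e t) ?_ ?_ hBi
        · simp only [Set.mem_setOf_eq]
          rw [remaining_mem]
          simp
        · intro heq2
          rw [← heq2, Equiv.symm_apply_apply] at hlt
          exact lt_irrefl _ hlt
      · exact hr.le

end Aux2
section Aux3

variable {I S : Type*}

/-- The envy relation: `EnvyRel P pr μ j i` means `i` justifiably-with-ties envies `j`. -/
def EnvyRel (P : I → Option S → Option S → Prop) (pr : S → I → I → Prop)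
    (μ : I → Option S) (j i : I) : Prop :=
  ∃ s, μ j = some s ∧ μ i ≠ some s ∧ P i (some s) (μ i) ∧ ¬ pr s i j ∧ ¬ pr s j i

lemma zmod_val_add_one {n : ℕ} [NeZero n] (z : ZMod n) :
    (z + 1).val = (z.val + 1) % n := by
  rw [ZMod.val_add]
  rcases Nat.lt_or_ge 1 n with h | h
  · haveI : Fact (1 < n) := ⟨h⟩
    rw [ZMod.val_one]
  · have hn1 : n = 1 := by
      have := NeZero.pos n
      omega
    subst hn1
    simp [Nat.mod_one]

lemma envy_acyclic [Fintype I] (P : I → Option S → Option S → Prop)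
    (hP : ∀ i, StrictPref (P i)) (q : S → ℕ) (pr : S → I → I → Prop)
    (hpr : ∀ s, WeakOrderRel (pr s)) (μ : I → Option S) (hμ : IsMatching q μ)
    (hsosm : IsSOSM P q pr μ) : ∀ x, ¬ Relation.TransGen (EnvyRel P pr μ) x x := by
  classical
  intro x hx
  set E := EnvyRel P pr μ with hE
  -- extract a path from the transitive closure
  have hpath : ∀ a b : I, Relation.TransGen E a b →
      ∃ m, ∃ f : ℕ → I, 1 ≤ m ∧ f 0 = a ∧ f m = b ∧ ∀ k < m, E (f k) (f (k + 1)) := by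
    intro a b h
    induction h with
    | @single c hc =>
        refine ⟨1, fun k => if k = 0 then a else c, le_refl 1, by simp, by simp, ?_⟩
        intro k hk
        interval_cases k
        simpa using hc
    | @tail b c hab hbc ih =>
        obtain ⟨m, f, hm, hf0, hfm, hfe⟩ := ih
        refine ⟨m + 1, fun k => if k ≤ m then f k else c, by omega, by simp [hf0], by simp, ?_⟩
        intro k hk
        rcases Nat.lt_or_ge k m with h1 | h1
        · simpa [Nat.le_of_lt h1, Nat.succ_le_of_lt h1] using hfe k h1
        · have hkm : k = m := by omega
          subst hkm
          simpa [hfm] using hbc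
  obtain ⟨m0, f0, hm0, hf00, hf0m, hf0e⟩ := hpath x x hx
  have hQ : ∃ m, 1 ≤ m ∧ ∃ f : ℕ → I, f m = f 0 ∧ ∀ k < m, E (f k) (f (k + 1)) :=
    ⟨m0, hm0, f0, by rw [hf0m, hf00], hf0e⟩
  set n := Nat.find hQ with hn
  obtain ⟨hn1, f, hfc, hfe⟩ := Nat.find_spec hQ
  have hmin := fun m (hm : m < n) => Nat.find_min hQ hm
  -- injectivity of f on [0, n)
  have hkey : ∀ a b : ℕ, a < b → b < n → f a ≠ f b := by
    intro a b hab hbn heqf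
    apply hmin (b - a) (by omega)
    refine ⟨by omega, fun k => f (a + k), ?_, ?_⟩
    · show f (a + (b - a)) = f (a + 0)
      have h1 : a + (b - a) = b := by omega
      have h2 : a + 0 = a := by omega
      rw [h1, h2]
      exact heqf.symm
    · intro k hk
      have : a + k < n := by omega
      exact hfe (a + k) this
  have hinj : ∀ a b : ℕ, a < n → b < n → f a = f b → a = b := by
    intro a b ha hb heq
    by_contra hne
    rcases Nat.lt_or_ge a b with h | h
    · exact hkey a b h hb heq
    · exact hkey b a (by omega) ha heq.symm
  haveI : NeZero n := ⟨by omega⟩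
  set F : ZMod n → I := fun z => f z.val with hF
  have Finj : Function.Injective F := by
    intro z w h
    exact ZMod.val_injective n (hinj _ _ (ZMod.val_lt z) (ZMod.val_lt w) h)
  have hvadd : ∀ z : ZMod n, F (z + 1) = f ((z.val + 1) % n) := by
    intro z
    show f ((z + 1).val) = f ((z.val + 1) % n)
    rw [zmod_val_add_one]
  have hedge : ∀ z : ZMod n, E (F z) (F (z + 1)) := by
    intro z
    have hzlt : z.val < n := ZMod.val_lt z
    rw [hvadd]
    rcases Nat.lt_or_ge (z.val + 1) n with h | h
    · rw [Nat.mod_eq_of_lt h]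
      exact hfe z.val hzlt
    · have h2 : z.val + 1 = n := by omega
      rw [h2, Nat.mod_self]
      have h3 := hfe z.val hzlt
      rw [h2, hfc] at h3
      exact h3
  -- the cyclic-exchange permutation
  set ι : ZMod n ↪ I := ⟨F, Finj⟩ with hι
  set g : Equiv.Perm I := Equiv.Perm.viaEmbedding (Equiv.subRight (1 : ZMod n)) ι with hg
  have hgF : ∀ z : ZMod n, g (F z) = F (z - 1) := by
    intro z
    exact Equiv.Perm.viaEmbedding_apply (Equiv.subRight (1 : ZMod n)) ι z
  have hgoff : ∀ i : I, i ∉ Set.range F → g i = i := by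
    intro i hi
    exact Equiv.Perm.viaEmbedding_apply_of_notMem (Equiv.subRight (1 : ZMod n)) ι i hi
  set μ' : I → Option S := fun i => μ (g i) with hμ'def
  have hμ'F : ∀ z : ZMod n, μ' (F z) = μ (F (z - 1)) := by
    intro z
    show μ (g (F z)) = _
    rw [hgF]
  have hsub : ∀ z : ZMod n, z - 1 + 1 = z := by intro z; ring
  have himps : ∀ z : ZMod n, ∃ s, μ' (F z) = some s ∧ P (F z) (some s) (μ (F z)) := by
    intro z
    obtain ⟨s, hs1, _, hs3, _, _⟩ := hedge (z - 1)
    rw [hsub z] at hs3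
    exact ⟨s, by rw [hμ'F z]; exact hs1, hs3⟩
  have himp : ∀ i, RPref (P i) (μ' i) (μ i) := by
    intro i
    by_cases h : i ∈ Set.range F
    · obtain ⟨z, rfl⟩ := h
      obtain ⟨s, h1, h2⟩ := himps z
      rw [h1]
      exact Or.inl h2
    · right
      show μ (g i) = μ i
      rw [hgoff i h]
  have hcard : ∀ s, {i | μ' i = some s}.ncard = {i | μ i = some s}.ncard := by
    intro s
    have hset : {i | μ' i = some s} = g ⁻¹' {i | μ i = some s} := rfl
    rw [hset, ← Equiv.image_symm_eq_preimage, Set.ncard_image_of_injective _ g.symm.injective]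
  have hmatch : IsMatching q μ' := by
    intro s
    rw [hcard]
    exact hμ s
  obtain ⟨⟨hIR, hNW, hFair⟩, hOpt⟩ := hsosm
  have hIR' : IndividuallyRational P μ' := fun i => rpref_trans (hP i) (himp i) (hIR i)
  have hNW' : NonWasteful P q μ' := by
    intro i s h
    have h2 : P i (some s) (μ i) := by
      rcases himp i with h3 | h3
      · exact (hP i).2.1 h h3
      · rw [← h3]
        exact h
    rw [hcard]
    exact hNW i s h2
  have hFair' : Fair P pr μ' := by
    rintro ⟨i, j, s, hj, hine, hiR, hpri⟩
    have hRi : RPref (P i) (some s) (μ i) := rpref_trans (hP i) hiR (himp i)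
    have hμine : μ i ≠ some s := by
      intro h
      exact hine (rpref_antisymm (hP i) (h ▸ himp i) hiR)
    by_cases hjr : j ∈ Set.range F
    · obtain ⟨z, rfl⟩ := hjr
      obtain ⟨s', hs1, hs2, hs3, hs4, hs5⟩ := hedge (z - 1)
      rw [hsub z] at hs2 hs3 hs4 hs5
      have hj' : μ (F (z - 1)) = some s := by
        rw [← hμ'F z]
        exact hj
      have hss : s' = s := Option.some.inj (hs1.symm.trans hj')
      subst hss
      have hprij0 : pr s' i (F (z - 1)) := by
        by_contra hcon
        exact ((hpr s').2 i (F (z - 1)) (F z) hcon hs5) hpri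
      exact hFair ⟨i, F (z - 1), s', hj', hμine, hRi, hprij0⟩
    · have hj' : μ j = some s := by
        rw [← hj]
        show μ j = μ (g j)
        rw [hgoff j hjr]
      exact hFair ⟨i, j, s, hj', hμine, hRi, hpri⟩
  obtain ⟨s0, h01, h02⟩ := himps 0
  exact hOpt ⟨μ', hmatch, ⟨hIR', hNW', hFair'⟩, himp, F 0, by rw [h01]; exact h02⟩

end Aux3

/-- Corollary 4: with weak order priorities, every SOSM for `pr` is an SOSM for
some extension profile of `pr` obtained by a single tiebreaking rule. -/
theorem sosm_via_single_tiebreaking {I S : Type*} [Fintype I] [Fintype S]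
    (hI : 3 ≤ Fintype.card I)
    (P : I → Option S → Option S → Prop) (hP : ∀ i, StrictPref (P i))
    (q : S → ℕ) (hq : ∀ s, 1 ≤ q s)
    (pr : S → I → I → Prop) (hpr : ∀ s, WeakOrderRel (pr s))
    (μ : I → Option S) (hμ : IsMatching q μ) (hsosm : IsSOSM P q pr μ) :
    ∃ pr' : S → I → I → Prop, IsExtensionProfile pr pr' ∧
      SingleTiebreakProfile pr pr' ∧ IsSOSM P q pr' μ := by
  classical
  obtain ⟨r, hr⟩ := exists_rank (EnvyRel P pr μ) (envy_acyclic P hP q pr hpr μ hμ hsosm)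
  set pr' : S → I → I → Prop := fun s => Tiebreak (pr s) r with hpr'
  have htot : ∀ s, TotalOrderRel (pr' s) := fun s => tiebreak_total (hpr s) r
  have hext : IsExtensionProfile pr pr' := fun s => ⟨htot s, fun i j h => Or.inl h⟩
  have hstp : SingleTiebreakProfile pr pr' := by
    refine ⟨r, fun s => ?_⟩
    obtain ⟨e, he⟩ := exists_enum_total (htot s)
    exact ⟨e, smo_of_enum (hpr s) r e he, he.symm⟩
  obtain ⟨⟨hIR, hNW, hFair⟩, hOpt⟩ := hsosm
  have hFair' : Fair P pr' μ := by
    rintro ⟨i, j, s, hj, hine, hiR, hpri⟩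
    rcases hpri with h | ⟨h1, h2, h3⟩
    · exact hFair ⟨i, j, s, hj, hine, hiR, h⟩
    · have hPi : P i (some s) (μ i) := by
        rcases hiR with h' | h'
        · exact h'
        · exact absurd h'.symm hine
      have hEji : EnvyRel P pr μ j i := ⟨s, hj, hine, hPi, h1, h2⟩
      exact absurd h3 (lt_asymm (hr j i hEji))
  refine ⟨pr', hext, hstp, ⟨hIR, hNW, hFair'⟩, ?_⟩
  rintro ⟨μ'', hm, ⟨hIR'', hNW'', hFair''⟩, hdom⟩
  apply hOpt
  refine ⟨μ'', hm, ⟨hIR'', hNW'', ?_⟩, hdom⟩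
  rintro ⟨i, j, s, h1, h2, h3, h4⟩
  exact hFair'' ⟨i, j, s, h1, h2, h3, Or.inl h4⟩
end

section
/- If ≻_s is acyclic for every s ∈ S, then for every correspondence C assigning to each s ∈ S a set C(s) ⊆ I × I, there exists a matching that is partially stable for (≻, C). -/
set_option linter.unusedSectionVars false

section PSAuxSec

namespace PSAux

lemma transGen_chain {I : Type*} {B : I → I → Prop} {a b : I} (h : Relation.TransGen B a b) :
    ∃ (K : ℕ) (x : ℕ → I), 1 ≤ K ∧ x 0 = a ∧ x K = b ∧
      ∀ m, 1 ≤ m → m ≤ K → B (x (m - 1)) (x m) := by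
  induction h with
  | @single c hc =>
    refine ⟨1, fun n => if n = 0 then a else c, le_refl _, by simp, by simp, ?_⟩
    intro m h1 h2
    have : m = 1 := by omega
    subst this; simpa using hc
  | @tail c d hac hcd ih =>
    obtain ⟨K, x, hK, h0, hKc, hchain⟩ := ih
    refine ⟨K + 1, fun n => if n = K + 1 then d else x n, by omega, ?_, by simp, ?_⟩
    · simp only [if_neg (by omega : ¬ (0 = K + 1))]; exact h0
    · intro m h1 h2
      by_cases hm : m = K + 1
      · subst hm
        simp only [if_pos rfl, if_neg (by omega : ¬ (K + 1 - 1 = K + 1))]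
        simpa [hKc] using hcd
      · have hmK : m ≤ K := by omega
        simp only [if_neg (by omega : ¬ (m - 1 = K + 1)), if_neg (by omega : ¬ (m = K + 1))]
        exact hchain m h1 hmK

lemma acyclic_transGen_irrefl {I : Type*} {B : I → I → Prop} (h : AcyclicRel B) (i : I) :
    ¬ Relation.TransGen B i i := by
  intro ht
  obtain ⟨K, x, hK, h0, hKi, hchain⟩ := transGen_chain ht
  by_cases hK1 : K = 1
  · subst hK1
    have hBii : B i i := by
      have := hchain 1 (le_refl _) (le_refl _)
      simpa [h0, hKi] using this
    exact h ⟨1, fun _ => i, le_refl _, fun _ _ _ => hBii, hBii⟩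
  · refine h ⟨K - 1, x, by omega, fun m h1 h2 => hchain m h1 (by omega), ?_⟩
    have := hchain K (by omega) (le_refl _)
    rwa [hKi, ← h0] at this

lemma exists_top {I : Type*} [DecidableEq I] {f : I → ℕ} (hf : Function.Injective f) :
    ∀ (n : ℕ) (T : Finset I), n ≤ T.card →
      ∃ K ⊆ T, K.card = n ∧ ∀ a ∈ K, ∀ b ∈ T \ K, f a < f b := by
  intro n
  induction n with
  | zero => intro T _; exact ⟨∅, Finset.empty_subset _, Finset.card_empty, by simp⟩
  | succ n ih =>
    intro T hT
    have hTne : T.Nonempty := Finset.card_pos.mp (by omega)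
    obtain ⟨m, hm, hmin⟩ := T.exists_min_image f hTne
    obtain ⟨K', hK'sub, hK'card, hK'⟩ := ih (T.erase m) (by rw [Finset.card_erase_of_mem hm]; omega)
    have hmK' : m ∉ K' := fun hc => (Finset.mem_erase.mp (hK'sub hc)).1 rfl
    refine ⟨insert m K', ?_, ?_, ?_⟩
    · exact Finset.insert_subset hm (hK'sub.trans (Finset.erase_subset _ _))
    · rw [Finset.card_insert_of_notMem hmK', hK'card]
    · intro a ha b hb
      obtain ⟨hbT, hbK⟩ := Finset.mem_sdiff.mp hb
      have hbm : b ≠ m := fun hc => hbK (by rw [hc]; exact Finset.mem_insert_self _ _)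
      rcases Finset.mem_insert.mp ha with rfl | haK'
      · exact lt_of_le_of_ne (hmin b hbT) (fun hc => hbm (hf hc).symm)
      · exact hK' a haK' b (Finset.mem_sdiff.mpr ⟨Finset.mem_erase.mpr ⟨hbm, hbT⟩,
          fun hc => hbK (Finset.mem_insert_of_mem hc)⟩)

end PSAux

namespace PSAux

variable {I S : Type*} [Fintype I] [Fintype S] [DecidableEq I] [DecidableEq S]

/-- Available options given rejection set `A`. -/
def avail (A : Finset S) : Finset (Option S) := insert none (Aᶜ.image some)

noncomputable def pick (ρ : I → Option S → ℕ) (i : I) (A : Finset S) : Option S :=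
  (Finset.exists_min_image (avail A) (ρ i) ⟨none, Finset.mem_insert_self _ _⟩).choose

lemma pick_spec (ρ : I → Option S → ℕ) (i : I) (A : Finset S) :
    pick ρ i A ∈ avail A ∧ ∀ o ∈ avail A, ρ i (pick ρ i A) ≤ ρ i o :=
  (Finset.exists_min_image (avail A) (ρ i) ⟨none, Finset.mem_insert_self _ _⟩).choose_spec

lemma pick_some_notMem {ρ : I → Option S → ℕ} {i : I} {A : Finset S} {s : S}
    (h : pick ρ i A = some s) : s ∉ A := by
  have := (pick_spec ρ i A).1
  rw [h] at this
  rcases Finset.mem_insert.mp this with hc | hc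
  · exact absurd hc (by simp)
  · obtain ⟨t, ht, hts⟩ := Finset.mem_image.mp hc
    obtain rfl : t = s := Option.some_injective _ hts
    exact fun hc' => (Finset.mem_compl.mp ht) hc'

lemma pick_le_none (ρ : I → Option S → ℕ) (i : I) (A : Finset S) :
    ρ i (pick ρ i A) ≤ ρ i none :=
  (pick_spec ρ i A).2 none (Finset.mem_insert_self _ _)

lemma pick_le_of_notMem (ρ : I → Option S → ℕ) (i : I) {A : Finset S} {s : S} (h : s ∉ A) :
    ρ i (pick ρ i A) ≤ ρ i (some s) :=
  (pick_spec ρ i A).2 (some s) (Finset.mem_insert_of_mem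
    (Finset.mem_image_of_mem some (Finset.mem_compl.mpr h)))

noncomputable def prop (ρ : I → Option S → ℕ) (R : I → Finset S) (i : I) : Option S :=
  pick ρ i (R i)

def Inv (ρ : I → Option S → ℕ) (k : S → I → ℕ) (q : S → ℕ) (R : I → Finset S) : Prop :=
  ∀ i s, s ∈ R i →
    q s ≤ (Finset.univ.filter (fun j => prop ρ R j = some s ∧ k s j < k s i)).card

def Bal (ρ : I → Option S → ℕ) (q : S → ℕ) (R : I → Finset S) : Prop :=
  ∀ s, (Finset.univ.filter (fun j => prop ρ R j = some s)).card ≤ q s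


lemma step (ρ : I → Option S → ℕ) (k : S → I → ℕ) (q : S → ℕ)
    (hk : ∀ s, Function.Injective (k s)) (R : I → Finset S)
    (hinv : Inv ρ k q R) (hbal : ¬ Bal ρ q R) :
    ∃ R', Inv ρ k q R' ∧ (∑ i, ((R' i)ᶜ).card) < (∑ i, ((R i)ᶜ).card) := by
  rw [Bal] at hbal
  push_neg at hbal
  obtain ⟨s, hs⟩ := hbal
  set T := Finset.univ.filter (fun j => prop ρ R j = some s) with hT
  obtain ⟨K, hKT, hKcard, hKtop⟩ := exists_top (hk s) (q s) T (le_of_lt hs)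
  set R' := fun i => if i ∈ T \ K then insert s (R i) else R i with hR'
  have fact1 : ∀ j, j ∉ T \ K → prop ρ R' j = prop ρ R j := by
    intro j hj
    simp only [prop, hR', if_neg hj]
  have fact2 : ∀ j ∈ T \ K, prop ρ R j = some s := by
    intro j hj
    exact (Finset.mem_filter.mp (Finset.mem_sdiff.mp hj).1).2
  have factK : ∀ j ∈ K, prop ρ R' j = some s := by
    intro j hj
    rw [fact1 j (fun hc => (Finset.mem_sdiff.mp hc).2 hj)]
    exact (Finset.mem_filter.mp (hKT hj)).2
  -- all members of K beat any i with s ∈ R i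
  have hKlt : ∀ i, s ∈ R i → ∀ j ∈ K, k s j < k s i := by
    intro i hi j hj
    have hF := hinv i s hi
    set F := Finset.univ.filter (fun j => prop ρ R j = some s ∧ k s j < k s i) with hFdef
    have hFT : F ⊆ T := by
      intro a ha
      exact Finset.mem_filter.mpr ⟨Finset.mem_univ _, (Finset.mem_filter.mp ha).2.1⟩
    by_cases hFK : F ⊆ K
    · have : F = K := Finset.eq_of_subset_of_card_le hFK (by omega)
      have := this ▸ hj
      exact (Finset.mem_filter.mp this).2.2
    · obtain ⟨j1, hj1F, hj1K⟩ := Finset.not_subset.mp hFK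
      have h1 : k s j < k s j1 := hKtop j hj j1 (Finset.mem_sdiff.mpr ⟨hFT hj1F, hj1K⟩)
      have h2 : k s j1 < k s i := (Finset.mem_filter.mp hj1F).2.2
      omega
  have hinv' : Inv ρ k q R' := by
    intro i s'' hs''
    have hmem : s'' ∈ R i ∨ (s'' = s ∧ i ∈ T \ K) := by
      by_cases hi : i ∈ T \ K
      · simp only [hR', if_pos hi] at hs''
        rcases Finset.mem_insert.mp hs'' with rfl | h
        · exact Or.inr ⟨rfl, hi⟩
        · exact Or.inl h
      · simp only [hR', if_neg hi] at hs''
        exact Or.inl hs''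
    by_cases hss : s'' = s
    · subst hss
      have hKsub : K ⊆ Finset.univ.filter (fun j => prop ρ R' j = some s'' ∧ k s'' j < k s'' i) := by
        intro j hj
        refine Finset.mem_filter.mpr ⟨Finset.mem_univ _, factK j hj, ?_⟩
        rcases hmem with h | ⟨_, hi⟩
        · exact hKlt i h j hj
        · exact hKtop j hj i hi
      calc q s'' = K.card := hKcard.symm
        _ ≤ _ := Finset.card_le_card hKsub
    · have hRi : s'' ∈ R i := by
        rcases hmem with h | ⟨h, _⟩
        · exact h
        · exact absurd h hss
      refine le_trans (hinv i s'' hRi) (Finset.card_le_card ?_)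
      intro j hj
      obtain ⟨_, hjp, hjk⟩ := Finset.mem_filter.mp hj
      have hjT : j ∉ T \ K := by
        intro hc
        have := fact2 j hc
        rw [hjp] at this
        exact hss (Option.some_injective _ this)
      exact Finset.mem_filter.mpr ⟨Finset.mem_univ _, by rw [fact1 j hjT]; exact hjp, hjk⟩
  -- measure decrease
  have hTK : (T \ K).Nonempty := by
    rw [← Finset.card_pos, Finset.card_sdiff_of_subset hKT]
    omega
  obtain ⟨i0, hi0⟩ := hTK
  have hsub : ∀ i, ((R' i)ᶜ).card ≤ ((R i)ᶜ).card := by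
    intro i
    apply Finset.card_le_card
    rw [Finset.compl_subset_compl]
    simp only [hR']
    split
    · exact Finset.subset_insert _ _
    · exact subset_refl _
  have hi0lt : ((R' i0)ᶜ).card < ((R i0)ᶜ).card := by
    have hs0 : s ∉ R i0 := pick_some_notMem (fact2 i0 hi0)
    have h1 : R' i0 = insert s (R i0) := by simp only [hR', if_pos hi0]
    have h2 : 0 < ((R i0)ᶜ).card := Finset.card_pos.mpr ⟨s, Finset.mem_compl.mpr hs0⟩
    rw [h1, Finset.compl_insert, Finset.card_erase_of_mem (Finset.mem_compl.mpr hs0)]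
    omega
  refine ⟨R', hinv', Finset.sum_lt_sum (fun i _ => hsub i) ⟨i0, Finset.mem_univ _, hi0lt⟩⟩

lemma main (ρ : I → Option S → ℕ) (k : S → I → ℕ) (q : S → ℕ)
    (hk : ∀ s, Function.Injective (k s)) :
    ∀ (m : ℕ) (R : I → Finset S), Inv ρ k q R → (∑ i, ((R i)ᶜ).card) ≤ m →
      ∃ R', Inv ρ k q R' ∧ Bal ρ q R' := by
  intro m
  induction m with
  | zero =>
    intro R hinv hm
    by_cases hbal : Bal ρ q R
    · exact ⟨R, hinv, hbal⟩
    · obtain ⟨R', _, hlt⟩ := step ρ k q hk R hinv hbal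
      omega
  | succ m ih =>
    intro R hinv hm
    by_cases hbal : Bal ρ q R
    · exact ⟨R, hinv, hbal⟩
    · obtain ⟨R', hinv', hlt⟩ := step ρ k q hk R hinv hbal
      exact ih R' hinv' (by omega)

end PSAux

end PSAuxSec

/-- Corollary 7: if every priority relation is acyclic, then for every
correspondence `C` there exists a partially stable matching for `(pr, C)`. -/
theorem exists_partially_stable {I S : Type*} [Fintype I] [Fintype S]
    (hI : 3 ≤ Fintype.card I)
    (P : I → Option S → Option S → Prop) (hP : ∀ i, StrictPref (P i))
    (q : S → ℕ) (hq : ∀ s, 1 ≤ q s)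
    (pr : S → I → I → Prop)
    (hasym : ∀ s, Asymm (pr s)) (hacyc : ∀ s, AcyclicRel (pr s))
    (C : S → I → I → Prop) :
    ∃ μ : I → Option S, IsMatching q μ ∧ PartiallyStable P q pr C μ := by
  classical
  -- numeric rank of preferences
  set ρ : I → Option S → ℕ :=
    fun i a => (Finset.univ.filter (fun c => P i c a)).card with hρdef
  have hρ : ∀ i a b, P i a b → ρ i a < ρ i b := by
    intro i a b hab
    apply Finset.card_lt_card
    rw [Finset.ssubset_iff_of_subset]
    · refine ⟨a, Finset.mem_filter.mpr ⟨Finset.mem_univ _, hab⟩, ?_⟩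
      intro hc
      exact (hP i).1 a a (Finset.mem_filter.mp hc).2 (Finset.mem_filter.mp hc).2
    · intro c hc
      exact Finset.mem_filter.mpr ⟨Finset.mem_univ _, (hP i).2.1 (Finset.mem_filter.mp hc).2 hab⟩
  -- numeric priority keys
  set N := Fintype.card I with hN
  set g : I → ℕ := fun i => ((Fintype.equivFin I) i : ℕ) with hg
  have hg_inj : Function.Injective g := by
    intro i j h
    exact (Fintype.equivFin I).injective (Fin.ext h)
  have hgN : ∀ i, g i < N := fun i => ((Fintype.equivFin I) i).2
  set f : S → I → ℕ :=
    fun s i => (Finset.univ.filter (fun j => Relation.TransGen (pr s) j i)).card with hf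
  have hfmono : ∀ s i j, pr s i j → f s i < f s j := by
    intro s i j hij
    apply Finset.card_lt_card
    rw [Finset.ssubset_iff_of_subset]
    · refine ⟨i, Finset.mem_filter.mpr ⟨Finset.mem_univ _, Relation.TransGen.single hij⟩, ?_⟩
      intro hc
      exact PSAux.acyclic_transGen_irrefl (hacyc s) i (Finset.mem_filter.mp hc).2
    · intro c hc
      exact Finset.mem_filter.mpr ⟨Finset.mem_univ _,
        Relation.TransGen.tail (Finset.mem_filter.mp hc).2 hij⟩
  set k : S → I → ℕ := fun s i => f s i * N + g i with hk
  have hk_mono : ∀ s i j, pr s i j → k s i < k s j := by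
    intro s i j hij
    have h1 := hfmono s i j hij
    have h2 : (f s i + 1) * N ≤ f s j * N := Nat.mul_le_mul_right N h1
    have h3 : f s i * N + N = (f s i + 1) * N := by ring
    have h4 := hgN i
    show f s i * N + g i < f s j * N + g j
    have h5 : 0 ≤ g j := Nat.zero_le _
    linarith
  have hk_inj : ∀ s, Function.Injective (k s) := by
    intro s i j h
    apply hg_inj
    have h1 : (f s i * N + g i) % N = (f s j * N + g j) % N := by
      exact congrArg (· % N) h
    rw [Nat.mul_add_mod', Nat.mul_add_mod', Nat.mod_eq_of_lt (hgN i), Nat.mod_eq_of_lt (hgN j)] at h1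
    exact h1
  -- run deferred acceptance
  obtain ⟨R, hinv, hbal⟩ := PSAux.main ρ k q hk_inj
    (∑ i, (((∅ : Finset S))ᶜ).card) (fun _ => ∅)
    (fun i s hs => absurd hs (Finset.notMem_empty _)) (le_refl _)
  set μ := PSAux.prop ρ R with hμ
  have hμpick : ∀ i, μ i = PSAux.pick ρ i (R i) := fun i => rfl
  have hμmem : ∀ i s, P i (some s) (μ i) → s ∈ R i := by
    intro i s h
    by_contra hs
    have h1 := PSAux.pick_le_of_notMem ρ i hs
    have h2 := hρ i (some s) (μ i) h
    rw [hμpick i] at h2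
    omega
  have hcard : ∀ s : S, {i : I | μ i = some s}.ncard =
      (Finset.univ.filter (fun j => PSAux.prop ρ R j = some s)).card := by
    intro s
    rw [show {i : I | μ i = some s} =
        ↑(Finset.univ.filter (fun j => PSAux.prop ρ R j = some s)) by
      ext i; simp [hμ]]
    exact Set.ncard_coe_finset _
  refine ⟨μ, ?_, ?_, ?_, ?_⟩
  · intro s
    rw [hcard s]
    exact hbal s
  · -- individually rational
    intro i
    by_cases h : μ i = none
    · exact Or.inr h
    · left
      rcases (hP i).2.2 (μ i) none h with h1 | h1
      · exact h1
      · exfalso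
        have h2 := hρ i none (μ i) h1
        have h3 := PSAux.pick_le_none ρ i (R i)
        rw [← hμpick i] at h3
        omega
  · -- non-wasteful
    intro i s h
    have hsR := hμmem i s h
    have h1 := hinv i s hsR
    have h2 := hbal s
    have h3 : (Finset.univ.filter (fun j => PSAux.prop ρ R j = some s ∧ k s j < k s i)) ⊆
        (Finset.univ.filter (fun j => PSAux.prop ρ R j = some s)) := by
      intro a ha
      exact Finset.mem_filter.mpr ⟨Finset.mem_univ _, (Finset.mem_filter.mp ha).2.1⟩
    have h4 := Finset.card_le_card h3
    rw [hcard s]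
    omega
  · -- no priority violations at all
    intro i j s hj hp hpr
    exfalso
    have hsR := hμmem i s hp
    have h1 := hinv i s hsR
    have h2 := hbal s
    have hk1 : k s i < k s j := hk_mono s i j hpr
    have hjmem : j ∈ Finset.univ.filter (fun j => PSAux.prop ρ R j = some s) :=
      Finset.mem_filter.mpr ⟨Finset.mem_univ _, hj⟩
    have hjne : j ∉ Finset.univ.filter (fun j => PSAux.prop ρ R j = some s ∧ k s j < k s i) := by
      intro hc
      have := (Finset.mem_filter.mp hc).2.2
      omega
    have h5 : insert j (Finset.univ.filter
        (fun j => PSAux.prop ρ R j = some s ∧ k s j < k s i)) ⊆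
        Finset.univ.filter (fun j => PSAux.prop ρ R j = some s) := by
      intro a ha
      rcases Finset.mem_insert.mp ha with rfl | haF
      · exact hjmem
      · exact Finset.mem_filter.mpr ⟨Finset.mem_univ _, (Finset.mem_filter.mp haF).2.1⟩
    have h6 := Finset.card_le_card h5
    rw [Finset.card_insert_of_notMem hjne] at h6
    omega
end
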